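/- arXiv:0811.3075 — 3 statements merged into one kernel-verified Lean document; each statement's English description precedes it below -/
import Mathlib

section
/- For all real numbers a, b with 0 < a < 1, 0 < b < 1, and every x > 0, b · ∫₀^∞ e^{−y} (1−e^{−y})^{b−1} ( ∫_{x+y}^∞ e^{(b+1)u} (e^u − 1)^{−(a+b+1)} du ) dy = [Γ(a) Γ(b+1) / Γ(a+b+1)] · (e^x − 1)^{−a}. -/
open MeasureTheory Real Set

lemma img1 (z : ℝ) : (fun u : ℝ => 1 - Real.exp (-u)) '' Ioi z = Ioo (1 - Real.exp (-z)) 1 := by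
  ext w
  constructor
  · rintro ⟨u, hu, rfl⟩
    have h1 : Real.exp (-u) < Real.exp (-z) := Real.exp_lt_exp.2 (by simpa using (mem_Ioi.1 hu))
    have h2 : 0 < Real.exp (-u) := Real.exp_pos _
    simp only [mem_Ioo]
    exact ⟨by simp only [mem_Ioi] at hu; linarith, by linarith⟩
  · rintro ⟨h1, h2⟩
    have hw : 0 < 1 - w := by linarith
    refine ⟨-Real.log (1 - w), ?_, ?_⟩
    · have : Real.log (1 - w) < -z := by
        rw [← Real.log_exp (-z)]
        exact Real.log_lt_log hw (by linarith)
      simp only [mem_Ioi]; linarith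
    · simp [Real.exp_log hw]

lemma img2 {c : ℝ} (hc : 0 < c) : (fun s : ℝ => 1 - c * s) '' Ioo 0 1 = Ioo (1 - c) 1 := by
  ext w
  constructor
  · rintro ⟨s, ⟨hs0, hs1⟩, rfl⟩
    simp only [mem_Ioo]
    constructor <;> nlinarith
  · rintro ⟨h1, h2⟩
    refine ⟨(1 - w) / c, ⟨div_pos (by linarith) hc, ?_⟩, by field_simp; ring⟩
    rw [div_lt_one hc]; linarith

lemma img3 {c : ℝ} (hc0 : 0 < c) (hc1 : c < 1) :
    (fun u : ℝ => (1 - c) * u / (1 - c * u)) '' Ioo 0 1 = Ioo 0 1 := by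
  ext v
  constructor
  · rintro ⟨u, ⟨hu0, hu1⟩, rfl⟩
    have hd : 0 < 1 - c * u := by nlinarith
    simp only [mem_Ioo]
    refine ⟨div_pos (by nlinarith) hd, ?_⟩
    rw [div_lt_one hd]; nlinarith
  · rintro ⟨hv0, hv1⟩
    have hd : 0 < 1 - c + c * v := by nlinarith
    refine ⟨v / (1 - c + c * v), ⟨div_pos hv0 hd, ?_⟩, ?_⟩
    · rw [div_lt_one hd]; nlinarith
    · show (1 - c) * (v / (1 - c + c * v)) / (1 - c * (v / (1 - c + c * v))) = v
      have h2 : 1 - c * (v / (1 - c + c * v)) = (1 - c) / (1 - c + c * v) := by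
        field_simp
        ring
      rw [h2]
      have h3 : (1:ℝ) - c ≠ 0 := by linarith
      field_simp

lemma realBeta {p q : ℝ} (hp : 0 < p) (hq : 0 < q) :
    ∫ v in Ioo (0:ℝ) 1, v ^ (p - 1) * (1 - v) ^ (q - 1) = Gamma p * Gamma q / Gamma (p + q) := by
  have hG : 0 < Real.Gamma (p + q) := Real.Gamma_pos_of_pos (by linarith)
  have hbeta : Complex.betaIntegral p q = ((∫ v in (0:ℝ)..1, v ^ (p - 1) * (1 - v) ^ (q - 1) : ℝ) : ℂ) := by
    rw [Complex.betaIntegral, ← intervalIntegral.integral_ofReal]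
    apply intervalIntegral.integral_congr
    intro t ht
    rw [uIcc_of_le zero_le_one] at ht
    have h0 : (0:ℝ) ≤ t := ht.1
    have h1 : (0:ℝ) ≤ 1 - t := by linarith [ht.2]
    push_cast
    rw [Complex.ofReal_cpow h0, Complex.ofReal_cpow h1]
    push_cast
    ring
  have h := Complex.Gamma_mul_Gamma_eq_betaIntegral (s := (p:ℂ)) (t := (q:ℂ))
    (by simpa using hp) (by simpa using hq)
  rw [hbeta] at h
  rw [← Complex.ofReal_add, Complex.Gamma_ofReal, Complex.Gamma_ofReal, Complex.Gamma_ofReal] at h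
  have h' : Real.Gamma p * Real.Gamma q
      = Real.Gamma (p + q) * ∫ v in (0:ℝ)..1, v ^ (p - 1) * (1 - v) ^ (q - 1) := by
    exact_mod_cast h
  rw [intervalIntegral.integral_of_le zero_le_one, MeasureTheory.integral_Ioc_eq_integral_Ioo] at h'
  field_simp
  linarith [h']

lemma int_g {s a d : ℝ} (ha : 0 < a) (hs : 0 ≤ s) (hd0 : 0 < d) (hd1 : d < 1) :
    IntegrableOn (fun w : ℝ => w ^ (-s) * (1 - w) ^ (a - 1)) (Ioo d 1) := by
  have hcomp : IntervalIntegrable (fun x : ℝ => (1 - x) ^ (a - 1)) volume d 1 := by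
    have h1 : IntervalIntegrable (fun x : ℝ => x ^ (a - 1)) volume 0 (1 - d) :=
      intervalIntegral.intervalIntegrable_rpow' (by linarith)
    have h2 := h1.comp_sub_left 1
    simpa using h2.symm
  have hIoo : IntegrableOn (fun x : ℝ => (1 - x) ^ (a - 1)) (Ioo d 1) := by
    have := (intervalIntegrable_iff.1 hcomp)
    rw [uIoc_of_le hd1.le] at this
    exact this.mono_set Ioo_subset_Ioc_self
  have hmaj : IntegrableOn (fun w : ℝ => d ^ (-s) * (1 - w) ^ (a - 1)) (Ioo d 1) :=
    hIoo.const_mul _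
  refine MeasureTheory.Integrable.mono hmaj (Measurable.aestronglyMeasurable (by fun_prop)) ?_
  rw [ae_restrict_iff' measurableSet_Ioo]
  refine ae_of_all _ fun w hw => ?_
  obtain ⟨hw0, hw1⟩ := hw
  have h1w : (0:ℝ) ≤ 1 - w := by linarith
  have hwpos : 0 < w := lt_trans hd0 hw0
  rw [Real.norm_eq_abs, Real.norm_eq_abs,
    abs_of_nonneg (mul_nonneg (Real.rpow_nonneg hwpos.le _) (Real.rpow_nonneg h1w _)),
    abs_of_nonneg (mul_nonneg (Real.rpow_nonneg hd0.le _) (Real.rpow_nonneg h1w _))]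
  exact mul_le_mul_of_nonneg_right
    (Real.rpow_le_rpow_of_nonpos hd0 hw0.le (by linarith)) (Real.rpow_nonneg h1w _)

lemma deriv_exp_aux (u : ℝ) : HasDerivAt (fun u : ℝ => 1 - Real.exp (-u)) (Real.exp (-u)) u := by
  have h := ((Real.hasDerivAt_exp (-u)).comp u (hasDerivAt_neg u)).const_sub 1
  simpa using h

lemma inj_exp_aux (s : Set ℝ) : InjOn (fun u : ℝ => 1 - Real.exp (-u)) s := by
  intro u1 _ u2 _ h
  simp only at h
  have : Real.exp (-u1) = Real.exp (-u2) := by linarith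
  have := Real.exp_injective this
  linarith

lemma inner_cov {a b z : ℝ} (hz : 0 < z) :
    (∫ u in Ioi z, Real.exp ((b + 1) * u) * (Real.exp u - 1) ^ (-(a + b + 1)))
      = ∫ w in Ioo (1 - Real.exp (-z)) 1, w ^ (-(a + b + 1)) * (1 - w) ^ (a - 1) := by
  have h := MeasureTheory.integral_image_eq_integral_abs_deriv_smul (measurableSet_Ioi (a := z))
      (f' := fun u => Real.exp (-u)) (fun u _ => (deriv_exp_aux u).hasDerivWithinAt)
      (inj_exp_aux _) (fun w => w ^ (-(a + b + 1)) * (1 - w) ^ (a - 1))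
  rw [img1] at h
  rw [h]
  apply setIntegral_congr_fun measurableSet_Ioi
  intro u hu
  have hu0 : 0 < u := lt_trans hz (mem_Ioi.1 hu)
  have hE : 0 < Real.exp (-u) := Real.exp_pos _
  have hE1 : Real.exp (-u) < 1 := by
    rw [← Real.exp_zero]; exact Real.exp_lt_exp.2 (by linarith)
  have h1m : (0:ℝ) ≤ 1 - Real.exp (-u) := by linarith
  simp only [smul_eq_mul]
  rw [abs_of_pos hE]
  have e1 : Real.exp u - 1 = Real.exp u * (1 - Real.exp (-u)) := by
    rw [mul_sub, mul_one, ← Real.exp_add]; simp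
  rw [e1, Real.mul_rpow (Real.exp_pos u).le h1m]
  have hsub : 1 - (1 - Real.exp (-u)) = Real.exp (-u) := by ring
  rw [hsub, ← Real.exp_mul, ← Real.exp_mul]
  rw [show Real.exp (-u) * ((1 - Real.exp (-u)) ^ (-(a + b + 1)) * Real.exp (-u * (a - 1)))
      = (Real.exp (-u) * Real.exp (-u * (a - 1))) * (1 - Real.exp (-u)) ^ (-(a + b + 1)) from by
        ring]
  rw [show Real.exp ((b + 1) * u) * (Real.exp (u * -(a + b + 1)) * (1 - Real.exp (-u)) ^ (-(a + b + 1)))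
      = (Real.exp ((b + 1) * u) * Real.exp (u * -(a + b + 1))) * (1 - Real.exp (-u)) ^ (-(a + b + 1)) from by
        ring]
  rw [← Real.exp_add, ← Real.exp_add]
  congr 1
  ring

noncomputable def Kf (a b d : ℝ) : ℝ := ∫ w in Ioo d 1, w ^ (-(a+b+1)) * (1-w) ^ (a-1)

lemma outer_cov {a b c : ℝ} :
    (∫ y in Ioi (0:ℝ), Real.exp (-y) * (1 - Real.exp (-y)) ^ (b-1) * Kf a b (1 - c * Real.exp (-y)))
      = ∫ t in Ioo (0:ℝ) 1, t ^ (b-1) * Kf a b (1 - c * (1-t)) := by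
  have h := MeasureTheory.integral_image_eq_integral_abs_deriv_smul (measurableSet_Ioi (a := (0:ℝ)))
      (f' := fun u => Real.exp (-u)) (fun u _ => (deriv_exp_aux u).hasDerivWithinAt)
      (inj_exp_aux _) (fun t => t ^ (b-1) * Kf a b (1 - c * (1-t)))
  rw [img1, show (1:ℝ) - Real.exp (-0) = 0 by simp] at h
  rw [h]
  apply setIntegral_congr_fun measurableSet_Ioi
  intro y _
  simp only [smul_eq_mul]
  rw [abs_of_pos (Real.exp_pos _)]
  rw [show 1 - c * (1 - (1 - Real.exp (-y))) = 1 - c * Real.exp (-y) by ring]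
  ring

lemma sub_w {a b c : ℝ} (hc0 : 0 < c) (hc1 : c < 1) :
    (∫ w in Ioo (1-c) 1, (1 - (1-w)/c) ^ b * (w ^ (-(a+b+1)) * (1-w) ^ (a-1)))
      = c ^ a * ∫ s in Ioo (0:ℝ) 1, s ^ (a-1) * (1-s) ^ b * (1 - c*s) ^ (-(a+b+1)) := by
  have hderiv : ∀ s ∈ Ioo (0:ℝ) 1, HasDerivWithinAt (fun s : ℝ => 1 - c * s) (-c) (Ioo 0 1) s := by
    intro s _
    simpa using (((hasDerivAt_id s).const_mul c).const_sub 1).hasDerivWithinAt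
  have hinj : InjOn (fun s : ℝ => 1 - c * s) (Ioo 0 1) := by
    intro s1 _ s2 _ h
    simp only at h
    have : c * s1 = c * s2 := by linarith
    exact mul_left_cancel₀ (ne_of_gt hc0) this
  have h := MeasureTheory.integral_image_eq_integral_abs_deriv_smul measurableSet_Ioo
      hderiv hinj (fun w => (1 - (1-w)/c) ^ b * (w ^ (-(a+b+1)) * (1-w) ^ (a-1)))
  rw [img2 hc0] at h
  rw [h, ← MeasureTheory.integral_const_mul]
  apply setIntegral_congr_fun measurableSet_Ioo
  intro s hs
  obtain ⟨hs0, hs1⟩ := hs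
  simp only [smul_eq_mul]
  rw [abs_neg, abs_of_pos hc0]
  have e1 : 1 - (1 - (1 - c * s)) / c = 1 - s := by field_simp; ring
  have e2 : (1:ℝ) - (1 - c * s) = c * s := by ring
  rw [e1, e2, Real.mul_rpow hc0.le hs0.le]
  have e3 : c * c ^ (a-1) = c ^ a := by
    nth_rewrite 1 [← Real.rpow_one c]
    rw [← Real.rpow_add hc0]
    ring_nf
  rw [← e3]
  ring


lemma sub_v {a b c : ℝ} (ha : 0 < a) (hc0 : 0 < c) (hc1 : c < 1) :
    (∫ u in Ioo (0:ℝ) 1, u ^ (a-1) * (1-u) ^ b * (1 - c*u) ^ (-(a+b+1)))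
      = (1-c) ^ (-a) * ∫ v in Ioo (0:ℝ) 1, v ^ (a-1) * (1-v) ^ b := by
  have h1c : (0:ℝ) < 1 - c := by linarith
  have hD : ∀ u ∈ Ioo (0:ℝ) 1, 0 < 1 - c * u := by
    intro u hu
    obtain ⟨hu0, hu1⟩ := hu
    nlinarith
  have hderiv : ∀ u ∈ Ioo (0:ℝ) 1,
      HasDerivWithinAt (fun u : ℝ => (1-c) * u / (1 - c*u)) ((1-c) / (1 - c*u)^2) (Ioo 0 1) u := by
    intro u hu
    have hDu := hD u hu
    have hnum : HasDerivAt (fun u : ℝ => (1-c) * u) (1-c) u := by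
      simpa using (hasDerivAt_id u).const_mul (1-c)
    have hden : HasDerivAt (fun u : ℝ => 1 - c*u) (-c) u := by
      simpa using (((hasDerivAt_id u).const_mul c).const_sub 1)
    have h := hnum.div hden (ne_of_gt hDu)
    have heq : ((1-c) * (1 - c*u) - (1-c) * u * (-c)) / (1 - c*u)^2 = (1-c) / (1 - c*u)^2 := by
      rw [div_eq_div_iff (by positivity) (by positivity)]
      ring
    rw [heq] at h
    exact h.hasDerivWithinAt
  have hinj : InjOn (fun u : ℝ => (1-c) * u / (1 - c*u)) (Ioo 0 1) := by
    intro u1 h1 u2 h2 h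
    have hD1 := hD u1 h1
    have hD2 := hD u2 h2
    simp only at h
    rw [div_eq_div_iff (ne_of_gt hD1) (ne_of_gt hD2)] at h
    nlinarith [h]
  have h := MeasureTheory.integral_image_eq_integral_abs_deriv_smul measurableSet_Ioo
      hderiv hinj (fun v => v ^ (a-1) * (1-v) ^ b)
  rw [img3 hc0 hc1] at h
  have hpt : ∀ u ∈ Ioo (0:ℝ) 1,
      |(1-c) / (1 - c*u)^2| • (((1-c) * u / (1 - c*u)) ^ (a-1) * (1 - (1-c) * u / (1 - c*u)) ^ b)
        = (1-c) ^ a * (u ^ (a-1) * (1-u) ^ b * (1 - c*u) ^ (-(a+b+1))) := by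
    intro u hu
    have hDu := hD u hu
    obtain ⟨hu0, hu1⟩ := hu
    have e4 : 1 - (1-c) * u / (1 - c*u) = (1-u) / (1 - c*u) := by
      rw [eq_div_iff (ne_of_gt hDu)]
      field_simp
      ring
    rw [smul_eq_mul, abs_of_pos (div_pos h1c (by positivity)), e4,
      Real.div_rpow (mul_nonneg h1c.le hu0.le) hDu.le,
      Real.div_rpow (by linarith : (0:ℝ) ≤ 1-u) hDu.le,
      Real.mul_rpow h1c.le hu0.le, Real.rpow_neg hDu.le]
    have e5 : (1 - c*u) ^ (a+b+1) = (1 - c*u) ^ (a-1) * (1 - c*u) ^ b * (1 - c*u)^(2:ℕ) := by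
      rw [← Real.rpow_natCast (1 - c*u) 2, ← Real.rpow_add hDu, ← Real.rpow_add hDu]
      norm_num
      congr 1
      ring
    have e6 : (1-c) * (1-c) ^ (a-1) = (1-c) ^ a := by
      nth_rewrite 1 [← Real.rpow_one (1-c)]
      rw [← Real.rpow_add h1c]
      ring_nf
    rw [e5, ← e6]
    have n1 : (1 - c*u) ^ (a-1) ≠ 0 := (Real.rpow_pos_of_pos hDu _).ne'
    have n2 : (1 - c*u) ^ b ≠ 0 := (Real.rpow_pos_of_pos hDu _).ne'
    have n3 : ((1 - c*u):ℝ)^(2:ℕ) ≠ 0 := by positivity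
    field_simp
  rw [setIntegral_congr_fun measurableSet_Ioo hpt, MeasureTheory.integral_const_mul] at h
  rw [h]
  rw [← mul_assoc, ← Real.rpow_add h1c]
  norm_num

lemma fub {a b c : ℝ} (ha : 0 < a) (hb : 0 < b) (hc0 : 0 < c) (hc1 : c < 1) :
    b * ∫ t in Ioo (0:ℝ) 1, t ^ (b-1) * Kf a b (1 - c * (1-t))
      = ∫ w in Ioo (1-c) 1, (1 - (1-w)/c) ^ b * (w ^ (-(a+b+1)) * (1-w) ^ (a-1)) := by
  have h1c : (0:ℝ) < 1 - c := by linarith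
  have habs : (0:ℝ) ≤ a + b + 1 := by linarith
  set μ := volume.restrict (Ioo (0:ℝ) 1) with hμ
  set g : ℝ → ℝ := fun w => w ^ (-(a+b+1)) * (1-w) ^ (a-1) with hg
  set F : ℝ × ℝ → ℝ := fun p => if 1 - c * (1 - p.1) < p.2 then p.1 ^ (b-1) * g p.2 else 0
    with hF
  have hgm : Measurable g := by fun_prop
  have hFmeas : AEStronglyMeasurable F (μ.prod μ) := by
    apply Measurable.aestronglyMeasurable
    exact Measurable.ite (measurableSet_lt (by fun_prop) (by fun_prop)) (by fun_prop)
      measurable_const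
  have hsec : ∀ t : ℝ, (fun w => F (t, w)) = (Ioi (1 - c*(1-t))).indicator
      (fun w => t ^ (b-1) * g w) := by
    intro t
    funext w
    simp only [hF, Set.indicator_apply, mem_Ioi]
  have hdt : ∀ t ∈ Ioo (0:ℝ) 1, 1-c < 1 - c*(1-t) ∧ 1 - c*(1-t) < 1 := by
    rintro t ⟨ht0, ht1⟩
    constructor <;> nlinarith
  have hset : ∀ d : ℝ, 0 ≤ d → Ioi d ∩ Ioo (0:ℝ) 1 = Ioo d 1 := by
    intro d hd
    ext w
    simp only [mem_inter_iff, mem_Ioi, mem_Ioo]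
    constructor
    · rintro ⟨h1, _, h3⟩; exact ⟨h1, h3⟩
    · rintro ⟨h1, h2⟩; exact ⟨h1, lt_of_le_of_lt hd h1, h2⟩
  have hgint : IntegrableOn g (Ioo (1-c) 1) := int_g ha habs h1c (by linarith)
  have hg_nonneg : ∀ w ∈ Ioo (0:ℝ) 1, 0 ≤ g w := fun w hw =>
    mul_nonneg (Real.rpow_nonneg hw.1.le _) (Real.rpow_nonneg (by linarith [hw.2]) _)
  have hInt_sec : ∀ t ∈ Ioo (0:ℝ) 1, Integrable (fun w => F (t,w)) μ := by
    intro t ht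
    rw [hsec t, MeasureTheory.integrable_indicator_iff measurableSet_Ioi]
    have hd := hdt t ht
    rw [IntegrableOn, hμ, Measure.restrict_restrict measurableSet_Ioi,
      hset _ (by linarith [hd.1])]
    exact (hgint.mono_set (Ioo_subset_Ioo_left hd.1.le)).const_mul _
  have hK : ∀ t ∈ Ioo (0:ℝ) 1, ∫ w, F (t,w) ∂μ = t ^ (b-1) * Kf a b (1 - c*(1-t)) := by
    intro t ht
    have hd := hdt t ht
    rw [hsec t, MeasureTheory.integral_indicator measurableSet_Ioi, hμ,
      Measure.restrict_restrict measurableSet_Ioi, hset _ (by linarith [hd.1]),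
      MeasureTheory.integral_const_mul]
    rfl
  have hKle : ∀ d, 1-c ≤ d → Kf a b d ≤ Kf a b (1-c) := by
    intro d hd
    apply setIntegral_mono_set hgint
    · filter_upwards [ae_restrict_mem measurableSet_Ioo] with w hw
      exact hg_nonneg w ⟨by linarith [hw.1], hw.2⟩
    · exact HasSubset.Subset.eventuallyLE (Ioo_subset_Ioo_left hd)
  have hK0 : ∀ d : ℝ, 0 ≤ d → 0 ≤ Kf a b d := by
    intro d hd
    apply setIntegral_nonneg measurableSet_Ioo
    intro w hw
    exact hg_nonneg w ⟨lt_of_le_of_lt hd hw.1, hw.2⟩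
  have hnorm : ∀ t ∈ Ioo (0:ℝ) 1, ∫ w, ‖F (t,w)‖ ∂μ = t ^ (b-1) * Kf a b (1 - c*(1-t)) := by
    intro t ht
    rw [← hK t ht]
    apply integral_congr_ae
    filter_upwards [ae_restrict_mem measurableSet_Ioo] with w hw
    rw [Real.norm_eq_abs, abs_of_nonneg]
    simp only [hF]
    split
    · exact mul_nonneg (Real.rpow_nonneg ht.1.le _) (hg_nonneg w hw)
    · exact le_rfl
  have hIntNorm : Integrable (fun t => ∫ w, ‖F (t,w)‖ ∂μ) μ := by
    have hmeas2 : AEStronglyMeasurable (fun t => ∫ w, ‖F (t,w)‖ ∂μ) μ :=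
      (hFmeas.norm).integral_prod_right'
    have htb : IntegrableOn (fun t : ℝ => t ^ (b-1)) (Ioo 0 1) := by
      have h1 : IntervalIntegrable (fun t : ℝ => t ^ (b-1)) volume 0 1 :=
        intervalIntegral.intervalIntegrable_rpow' (by linarith)
      have h2 := intervalIntegrable_iff.1 h1
      rw [uIoc_of_le zero_le_one] at h2
      exact h2.mono_set Ioo_subset_Ioc_self
    refine MeasureTheory.Integrable.mono (htb.mul_const (Kf a b (1-c))) hmeas2 ?_
    filter_upwards [ae_restrict_mem measurableSet_Ioo] with t ht
    rw [hnorm t ht, Real.norm_eq_abs, Real.norm_eq_abs]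
    have hd := hdt t ht
    have h1 : 0 ≤ t ^ (b-1) := Real.rpow_nonneg ht.1.le _
    have h2 : 0 ≤ Kf a b (1 - c*(1-t)) := hK0 _ (by linarith [hd.1])
    rw [abs_of_nonneg (mul_nonneg h1 h2),
      abs_of_nonneg (mul_nonneg h1 (hK0 _ h1c.le))]
    exact mul_le_mul_of_nonneg_left (hKle _ hd.1.le) h1
  have hFint : Integrable F (μ.prod μ) := by
    rw [MeasureTheory.integrable_prod_iff hFmeas]
    constructor
    · filter_upwards [ae_restrict_mem measurableSet_Ioo] with t ht using hInt_sec t ht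
    · exact hIntNorm
  have hswap : ∫ t, (∫ w, F (t,w) ∂μ) ∂μ = ∫ w, (∫ t, F (t,w) ∂μ) ∂μ := by
    apply MeasureTheory.integral_integral_swap
    exact hFint
  have hwsec : ∀ w ∈ Ioo (0:ℝ) 1, (∫ t, F (t,w) ∂μ)
      = (Ioi (1-c)).indicator (fun w => ((1-(1-w)/c) ^ b / b) * g w) w := by
    intro w hw
    obtain ⟨hw0, hw1⟩ := hw
    have hτc : c * (1 - (1-w)/c) = c - (1-w) := by field_simp
    have hiff : ∀ t : ℝ, (1 - c*(1-t) < w) ↔ t < 1 - (1-w)/c := by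
      intro t
      constructor
      · intro h
        have h2 : c * t < c * (1 - (1-w)/c) := by rw [hτc]; linarith
        exact lt_of_mul_lt_mul_left h2 hc0.le
      · intro h
        have h2 : c * t < c * (1 - (1-w)/c) := (mul_lt_mul_iff_right₀ hc0).2 h
        rw [hτc] at h2
        linarith
    have hsecw : (fun t => F (t,w)) = (Iio (1 - (1-w)/c)).indicator
        (fun t => t ^ (b-1) * g w) := by
      funext t
      simp only [hF, Set.indicator_apply, mem_Iio]
      rw [if_congr (hiff t) rfl rfl]
    rw [hsecw, MeasureTheory.integral_indicator measurableSet_Iio, hμ,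
        Measure.restrict_restrict measurableSet_Iio]
    by_cases hcase : 1-c < w
    · have hτ0 : 0 < 1 - (1-w)/c := by
        have h3 : (1-w)/c < 1 := (div_lt_one hc0).2 (by linarith)
        linarith
      have hτ1 : 1 - (1-w)/c < 1 := by
        have h3 : 0 < (1-w)/c := div_pos (by linarith) hc0
        linarith
      have hseteq : Iio (1 - (1-w)/c) ∩ Ioo 0 1 = Ioo 0 (1 - (1-w)/c) := by
        ext t
        simp only [mem_inter_iff, mem_Iio, mem_Ioo]
        constructor
        · rintro ⟨h1, h2, _⟩; exact ⟨h2, h1⟩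
        · rintro ⟨h1, h2⟩; exact ⟨h2, h1, lt_trans h2 hτ1⟩
      rw [hseteq, MeasureTheory.integral_mul_const]
      have hint : (∫ t in Ioo (0:ℝ) (1 - (1-w)/c), t ^ (b-1)) = (1 - (1-w)/c) ^ b / b := by
        rw [← MeasureTheory.integral_Ioc_eq_integral_Ioo,
            ← intervalIntegral.integral_of_le hτ0.le,
            integral_rpow (Or.inl (by linarith : (-1:ℝ) < b-1)),
            Real.zero_rpow (by linarith : b-1+1 ≠ 0)]
        norm_num
      rw [hint, Set.indicator_of_mem (mem_Ioi.2 hcase)]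
    · have hτ : 1 - (1-w)/c ≤ 0 := by
        have h3 : 1 ≤ (1-w)/c := (le_div_iff₀ hc0).2 (by linarith [not_lt.1 hcase])
        linarith
      have hseteq : Iio (1 - (1-w)/c) ∩ Ioo 0 1 = ∅ := by
        ext t
        simp only [mem_inter_iff, mem_Iio, mem_Ioo, mem_empty_iff_false, iff_false, not_and]
        intro h1 h2
        linarith
      rw [hseteq, Measure.restrict_empty, integral_zero_measure,
          Set.indicator_of_notMem (by simpa using not_lt.1 hcase)]
  calc b * ∫ t in Ioo (0:ℝ) 1, t ^ (b-1) * Kf a b (1 - c * (1-t))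
      = b * ∫ t, (∫ w, F (t,w) ∂μ) ∂μ := by
        rw [hμ, setIntegral_congr_fun measurableSet_Ioo (fun t ht => (hK t ht))]
    _ = b * ∫ w, (∫ t, F (t,w) ∂μ) ∂μ := by rw [hswap]
    _ = b * ∫ w in Ioo (1-c) 1, ((1-(1-w)/c) ^ b / b) * g w := by
        rw [hμ, setIntegral_congr_fun measurableSet_Ioo hwsec,
          MeasureTheory.integral_indicator measurableSet_Ioi,
          Measure.restrict_restrict measurableSet_Ioi, hset _ h1c.le]
    _ = ∫ w in Ioo (1-c) 1, b * (((1-(1-w)/c) ^ b / b) * g w) := by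
        rw [MeasureTheory.integral_const_mul]
    _ = ∫ w in Ioo (1-c) 1, (1 - (1-w)/c) ^ b * (w ^ (-(a+b+1)) * (1-w) ^ (a-1)) := by
        apply setIntegral_congr_fun measurableSet_Ioo
        intro w _
        field_simp
        try ring
        try exact Or.inl trivial

theorem statement9 (a b x : ℝ) (ha : 0 < a) (ha1 : a < 1) (hb : 0 < b) (hb1 : b < 1)
    (hx : 0 < x) :
    b * (∫ y in Ioi (0:ℝ),
          Real.exp (-y) * (1 - Real.exp (-y)) ^ (b - 1) *
            ∫ u in Ioi (x + y), Real.exp ((b + 1) * u) * (Real.exp u - 1) ^ (-(a + b + 1)))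
      = Gamma a * Gamma (b + 1) / Gamma (a + b + 1) * (Real.exp x - 1) ^ (-a) := by
  set c := Real.exp (-x) with hc
  have hc0 : 0 < c := Real.exp_pos _
  have hc1 : c < 1 := by
    rw [hc, ← Real.exp_zero]
    exact Real.exp_lt_exp.2 (by linarith)
  have h1c : (0:ℝ) < 1 - c := by linarith
  have step1 : (∫ y in Ioi (0:ℝ),
        Real.exp (-y) * (1 - Real.exp (-y)) ^ (b - 1) *
          ∫ u in Ioi (x + y), Real.exp ((b + 1) * u) * (Real.exp u - 1) ^ (-(a + b + 1)))
      = ∫ y in Ioi (0:ℝ),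
          Real.exp (-y) * (1 - Real.exp (-y)) ^ (b-1) * Kf a b (1 - c * Real.exp (-y)) := by
    apply setIntegral_congr_fun measurableSet_Ioi
    intro y hy
    have hy0 : (0:ℝ) < y := mem_Ioi.1 hy
    have hic := inner_cov (a := a) (b := b) (z := x + y) (by linarith)
    dsimp only
    rw [hic, Kf, show -(x+y) = -x + -y by ring, Real.exp_add]
  rw [step1, outer_cov, fub ha hb hc0 hc1, sub_w hc0 hc1, sub_v ha hc0 hc1]
  have hbeta : (∫ v in Ioo (0:ℝ) 1, v ^ (a-1) * (1-v) ^ b)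
      = Gamma a * Gamma (b+1) / Gamma (a+b+1) := by
    have hrb := realBeta ha (show (0:ℝ) < b+1 by linarith)
    rw [show (b:ℝ)+1-1 = b from by ring, show (a:ℝ)+(b+1) = a+b+1 from by ring] at hrb
    exact hrb
  rw [hbeta]
  have hex : Real.exp x - 1 = (1-c)/c := by
    rw [eq_div_iff hc0.ne']
    rw [hc, sub_mul, one_mul, ← Real.exp_add]
    simp
  rw [hex, Real.div_rpow h1c.le hc0.le,
    show c ^ (-a) = (c ^ a)⁻¹ from Real.rpow_neg hc0.le a]
  field_simp
end

section
/- For all real numbers a, b with 0 < a < 1, 0 < b < 1, and every x > 0, the triple integral ∫₀ˣ ∫_y^∞ ∫₀^∞ (1 − e^{−(x−y)})^{a−1} (1 − e^{−(v−y)})^{b−1} e^{−(v−y)} e^{(b+1)(u+v)} (e^{u+v} − 1)^{−(a+b+1)} du dv dy equals π Γ(a) Γ(b) / (sin(πa) Γ(a+b+1)). -/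
open MeasureTheory Real Set
open scoped ENNReal

lemma Mg {a c : ℝ} : Measurable fun t : ℝ => t ^ (a - 1) * (1 - t) ^ c := by
  fun_prop

lemma int_g_s12 {a c z : ℝ} (ha : 0 < a) (hc : c ≤ 0) (hz : z < 1) :
    IntegrableOn (fun t : ℝ => t ^ (a - 1) * (1 - t) ^ c) (Ioo 0 z) := by
  rcases le_or_gt z 0 with h | h
  · rw [Ioo_eq_empty (not_lt.2 h)]
    exact integrableOn_empty
  · have hz0 : 0 < 1 - z := by linarith
    have hbase : IntegrableOn (fun t : ℝ => t ^ (a - 1)) (Ioo 0 z) := by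
      have h1 := intervalIntegral.intervalIntegrable_rpow' (a := 0) (b := z) (r := a - 1)
        (by linarith)
      exact ((intervalIntegrable_iff_integrableOn_Ioc_of_le h.le).mp h1).mono_set
        Ioo_subset_Ioc_self
    refine Integrable.mono' (hbase.const_mul ((1 - z) ^ c)) Mg.aestronglyMeasurable.restrict ?_
    rw [ae_restrict_iff' measurableSet_Ioo]
    refine ae_of_all _ (fun t ht => ?_)
    have ht0 : (0:ℝ) < t := ht.1
    have ht1 : t < 1 := lt_of_lt_of_le ht.2 hz.le
    rw [Real.norm_eq_abs, abs_of_nonneg (mul_nonneg (Real.rpow_nonneg ht0.le _) (Real.rpow_nonneg (by linarith) _))]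
    have : (1 - t) ^ c ≤ (1 - z) ^ c :=
      Real.rpow_le_rpow_of_nonpos hz0 (by linarith [ht.2]) hc
    calc t ^ (a - 1) * (1 - t) ^ c ≤ t ^ (a - 1) * (1 - z) ^ c := by
          exact mul_le_mul_of_nonneg_left this (by positivity)
      _ = (1 - z) ^ c * t ^ (a - 1) := by ring

lemma beta_real {s t : ℝ} (hs : 0 < s) (ht : 0 < t) :
    ∫ w in Ioo (0:ℝ) 1, w ^ (s - 1) * (1 - w) ^ (t - 1)
      = Gamma s * Gamma t / Gamma (s + t) := by
  have h := Complex.Gamma_mul_Gamma_eq_betaIntegral (s := (s:ℂ)) (t := (t:ℂ))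
    (by simpa using hs) (by simpa using ht)
  have hbeta : Complex.betaIntegral s t
      = ((∫ w in Ioo (0:ℝ) 1, w ^ (s - 1) * (1 - w) ^ (t - 1) : ℝ) : ℂ) := by
    rw [Complex.betaIntegral, intervalIntegral.integral_of_le zero_le_one,
      integral_Ioc_eq_integral_Ioo]
    have : ∫ (w : ℝ) in Ioo (0:ℝ) 1, ((w ^ (s - 1) * (1 - w) ^ (t - 1) : ℝ) : ℂ)
        = ((∫ w in Ioo (0:ℝ) 1, w ^ (s - 1) * (1 - w) ^ (t - 1) : ℝ) : ℂ) :=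
      integral_ofReal (𝕜 := ℂ)
    rw [← this]
    refine setIntegral_congr_fun measurableSet_Ioo (fun w hw => ?_)
    obtain ⟨hw0, hw1⟩ := hw
    push_cast
    rw [Complex.ofReal_cpow hw0.le, Complex.ofReal_cpow (by linarith)]
    push_cast
    ring
  rw [hbeta, Complex.Gamma_ofReal, Complex.Gamma_ofReal, ← Complex.ofReal_add,
    Complex.Gamma_ofReal, ← Complex.ofReal_mul, ← Complex.ofReal_mul] at h
  have := Complex.ofReal_injective h
  have hpos : Real.Gamma (s + t) ≠ 0 := (Real.Gamma_pos_of_pos (by linarith)).ne'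
  field_simp [this]
  linear_combination -this

lemma L1 {a b v : ℝ} (hv : 0 ≤ v) :
    ∫ u in Ioi (0:ℝ), exp ((b + 1) * (u + v)) * (exp (u + v) - 1) ^ (-(a + b + 1))
      = ∫ t in Ioo 0 (exp (-v)), t ^ (a - 1) * (1 - t) ^ (-(a + b + 1)) := by
  have himg : (fun u : ℝ => exp (-(u + v))) '' Ioi 0 = Ioo 0 (exp (-v)) := by
    ext z
    constructor
    · rintro ⟨u, hu, rfl⟩
      exact ⟨exp_pos _, by rw [exp_lt_exp]; simp at hu ⊢; linarith⟩
    · rintro ⟨hz0, hz1⟩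
      refine ⟨-Real.log z - v, ?_, ?_⟩
      · have : Real.log z < -v := by
          have := Real.log_lt_log hz0 hz1
          rwa [Real.log_exp] at this
        simp only [mem_Ioi]; linarith
      · show exp (-(-Real.log z - v + v)) = z
        rw [show -(-Real.log z - v + v) = Real.log z by ring, Real.exp_log hz0]
  have hder : ∀ u ∈ Ioi (0:ℝ), HasDerivWithinAt (fun u : ℝ => exp (-(u + v)))
      (-exp (-(u + v))) (Ioi 0) u := by
    intro u _
    have h1 : HasDerivAt (fun u : ℝ => -(u + v)) (-1) u :=
      ((hasDerivAt_id u).add_const v).neg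
    have := h1.exp
    rw [mul_neg_one] at this
    exact this.hasDerivWithinAt
  have hinj : InjOn (fun u : ℝ => exp (-(u + v))) (Ioi 0) := by
    intro u1 _ u2 _ h
    simp only [Real.exp_eq_exp] at h
    linarith
  rw [← himg, integral_image_eq_integral_abs_deriv_smul measurableSet_Ioi hder hinj]
  refine setIntegral_congr_fun measurableSet_Ioi (fun u hu => ?_)
  have hu0 : (0:ℝ) < u := hu
  have hs : 0 < u + v := by linarith
  have he1 : exp (-(u + v)) < 1 := exp_lt_one_iff.mpr (by linarith)
  have h1 : exp (u + v) - 1 = exp (u + v) * (1 - exp (-(u + v))) := by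
    rw [mul_sub, ← Real.exp_add, add_neg_cancel, exp_zero, mul_one]
  rw [smul_eq_mul, abs_neg, abs_of_pos (exp_pos _), h1,
    Real.mul_rpow (exp_pos _).le (by linarith),
    ← Real.exp_mul, ← Real.exp_mul]
  rw [show exp ((b+1)*(u+v)) * (exp ((u+v) * -(a+b+1)) * (1 - exp (-(u+v))) ^ (-(a+b+1)))
      = (exp ((b+1)*(u+v)) * exp ((u+v) * -(a+b+1))) * (1 - exp (-(u+v))) ^ (-(a+b+1)) by ring,
    show exp (-(u+v)) * (exp (-(u+v) * (a-1)) * (1 - exp (-(u+v))) ^ (-(a+b+1)))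
      = (exp (-(u+v)) * exp (-(u+v) * (a-1))) * (1 - exp (-(u+v))) ^ (-(a+b+1)) by ring,
    ← Real.exp_add, ← Real.exp_add]
  ring_nf

lemma vint {b y m : ℝ} (hb : 0 < b) (hym : y < m) :
    IntegrableOn (fun v => (1 - exp (-(v - y))) ^ (b - 1) * exp (-(v - y))) (Ioo y m) ∧
    ∫ v in Ioo y m, (1 - exp (-(v - y))) ^ (b - 1) * exp (-(v - y))
      = (1 - exp (-(m - y))) ^ b / b := by
  set C := 1 - exp (-(m - y)) with hC
  have hC0 : 0 < C := by
    have : exp (-(m - y)) < 1 := exp_lt_one_iff.mpr (by linarith)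
    rw [hC]; linarith
  have hC1 : C < 1 := by
    have : 0 < exp (-(m - y)) := exp_pos _
    rw [hC]; linarith
  have himg : (fun v : ℝ => 1 - exp (-(v - y))) '' Ioo y m = Ioo 0 C := by
    ext w
    constructor
    · rintro ⟨v, ⟨hv1, hv2⟩, rfl⟩
      refine ⟨?_, ?_⟩
      · show 0 < 1 - exp (-(v - y))
        have : exp (-(v - y)) < 1 := exp_lt_one_iff.mpr (by linarith)
        linarith
      · show 1 - exp (-(v - y)) < C
        rw [hC]
        have : exp (-(m - y)) < exp (-(v - y)) := exp_lt_exp.mpr (by linarith)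
        linarith
    · rintro ⟨hw0, hwC⟩
      have h1w : 0 < 1 - w := by linarith
      refine ⟨y - Real.log (1 - w), ⟨?_, ?_⟩, ?_⟩
      · have : Real.log (1 - w) < 0 := Real.log_neg h1w (by linarith)
        show y < y - Real.log (1 - w)
        linarith
      · have h2 : exp (-(m - y)) < 1 - w := by rw [hC] at hwC; linarith
        have h3 := Real.log_lt_log (exp_pos _) h2
        rw [Real.log_exp] at h3
        show y - Real.log (1 - w) < m
        linarith
      · show 1 - exp (-(y - Real.log (1 - w) - y)) = w
        rw [show -(y - Real.log (1 - w) - y) = Real.log (1 - w) by ring, Real.exp_log h1w]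
        ring
  have hder : ∀ v ∈ Ioo y m, HasDerivWithinAt (fun v : ℝ => 1 - exp (-(v - y)))
      (exp (-(v - y))) (Ioo y m) v := by
    intro v _
    have h1 : HasDerivAt (fun v : ℝ => -(v - y)) (-1) v := ((hasDerivAt_id v).sub_const y).neg
    have h2 := h1.exp
    rw [mul_neg_one] at h2
    have := (h2.const_sub 1)
    rw [neg_neg] at this
    exact this.hasDerivWithinAt
  have hinj : InjOn (fun v : ℝ => 1 - exp (-(v - y))) (Ioo y m) := by
    intro v1 _ v2 _ h
    simp only [sub_right_inj, Real.exp_eq_exp, neg_inj] at h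
    linarith [h]
  have hgint : IntegrableOn (fun w : ℝ => w ^ (b - 1)) (Ioo 0 C) := by
    have h1 := intervalIntegral.intervalIntegrable_rpow' (a := 0) (b := C) (r := b - 1)
      (by linarith)
    exact ((intervalIntegrable_iff_integrableOn_Ioc_of_le hC0.le).mp h1).mono_set
      Ioo_subset_Ioc_self
  have hptw : ∀ v ∈ Ioo y m,
      |exp (-(v - y))| • (fun w : ℝ => w ^ (b - 1)) ((fun v : ℝ => 1 - exp (-(v - y))) v)
        = (1 - exp (-(v - y))) ^ (b - 1) * exp (-(v - y)) := by
    intro v _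
    simp only [smul_eq_mul, abs_of_pos (exp_pos _)]
    ring
  constructor
  · have := (integrableOn_image_iff_integrableOn_abs_deriv_smul measurableSet_Ioo hder hinj
      (fun w : ℝ => w ^ (b - 1))).mp (by rw [himg]; exact hgint)
    exact this.congr_fun hptw measurableSet_Ioo
  · have h1 : ∫ w in Ioo 0 C, w ^ (b - 1)
        = ∫ v in Ioo y m, |exp (-(v - y))| • (fun w : ℝ => w ^ (b - 1)) (1 - exp (-(v - y))) := by
      rw [← himg, integral_image_eq_integral_abs_deriv_smul measurableSet_Ioo hder hinj]
    have h2 : ∫ w in Ioo 0 C, w ^ (b - 1) = C ^ b / b := by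
      rw [← integral_Ioc_eq_integral_Ioo, ← intervalIntegral.integral_of_le hC0.le,
        integral_rpow (Or.inl (by linarith))]
      rw [show b - 1 + 1 = b by ring, Real.zero_rpow hb.ne', sub_zero]
    rw [← setIntegral_congr_fun measurableSet_Ioo hptw, ← h1, h2]

lemma moebius {a b p : ℝ} (hp0 : 0 < p) (hp1 : p < 1) :
    ∫ t in Ioo 0 p, t ^ (a - 1) * (1 - t) ^ (-(a + b + 1)) * ((1 - t / p) ^ b / b)
      = (p ^ a * (1 - p) ^ (-a) / b) * ∫ w in Ioo (0:ℝ) 1, w ^ b * (1 - w) ^ (a - 1) := by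
  have h1p : 0 < 1 - p := by linarith
  have himg : (fun w : ℝ => p * (1 - w) / (1 - p * w)) '' Ioo 0 1 = Ioo 0 p := by
    ext t
    constructor
    · rintro ⟨w, ⟨hw0, hw1⟩, rfl⟩
      have hD : 0 < 1 - p * w := by nlinarith
      constructor
      · exact div_pos (mul_pos hp0 (by linarith)) hD
      · rw [div_lt_iff₀ hD]
        nlinarith [mul_pos hp0 hw0]
    · rintro ⟨ht0, htp⟩
      have ht1 : t < 1 := lt_trans htp hp1
      have h1t : 0 < 1 - t := by linarith
      refine ⟨(p - t) / (p * (1 - t)), ⟨?_, ?_⟩, ?_⟩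
      · exact div_pos (by linarith) (mul_pos hp0 h1t)
      · rw [div_lt_one (mul_pos hp0 h1t)]
        nlinarith
      · show p * (1 - (p - t) / (p * (1 - t))) / (1 - p * ((p - t) / (p * (1 - t)))) = t
        rw [div_eq_iff]
        · field_simp
          ring
        · have hDq : 1 - p * ((p - t) / (p * (1 - t))) = (1 - p) / (1 - t) := by
            field_simp
            ring
          rw [hDq]
          exact (div_pos h1p h1t).ne'
  have hder : ∀ w ∈ Ioo (0:ℝ) 1, HasDerivWithinAt (fun w : ℝ => p * (1 - w) / (1 - p * w))
      (p * (p - 1) / (1 - p * w) ^ 2) (Ioo 0 1) w := by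
    rintro w ⟨hw0, hw1⟩
    have hD : 0 < 1 - p * w := by nlinarith
    have hn : HasDerivAt (fun w : ℝ => p * (1 - w)) (-p) w := by
      simpa using (((hasDerivAt_id w).const_sub 1).const_mul p)
    have hd : HasDerivAt (fun w : ℝ => 1 - p * w) (-p) w := by
      simpa using (((hasDerivAt_id w).const_mul p).const_sub 1)
    have := hn.div hd hD.ne'
    have heq : (-p * (1 - p * w) - p * (1 - w) * -p) / (1 - p * w) ^ 2
        = p * (p - 1) / (1 - p * w) ^ 2 := by ring
    rw [heq] at this
    exact this.hasDerivWithinAt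
  have hinj : InjOn (fun w : ℝ => p * (1 - w) / (1 - p * w)) (Ioo 0 1) := by
    rintro w1 ⟨h10, h11⟩ w2 ⟨h20, h21⟩ h
    have hD1 : 0 < 1 - p * w1 := by nlinarith
    have hD2 : 0 < 1 - p * w2 := by nlinarith
    simp only [div_eq_div_iff hD1.ne' hD2.ne'] at h
    have : (1 - p) * w1 = (1 - p) * w2 := by nlinarith
    exact mul_left_cancel₀ h1p.ne' this
  rw [← himg, integral_image_eq_integral_abs_deriv_smul measurableSet_Ioo hder hinj,
    ← integral_const_mul]
  refine setIntegral_congr_fun measurableSet_Ioo (fun w hw => ?_)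
  obtain ⟨hw0, hw1⟩ := hw
  have hD : 0 < 1 - p * w := by nlinarith
  have h1w : 0 < 1 - w := by linarith
  have hfw : 0 < p * (1 - w) / (1 - p * w) := by positivity
  have habs : |p * (p - 1) / (1 - p * w) ^ 2| = p * (1 - p) * (1 - p * w) ^ (-(2:ℝ)) := by
    rw [abs_div, abs_of_nonpos (by nlinarith), abs_of_pos (by positivity),
      Real.rpow_neg hD.le, ← Real.rpow_natCast (1 - p*w) 2]
    push_cast
    rw [div_eq_mul_inv]
    ring
  have e0 : 1 - p * (1 - w) / (1 - p * w) = (1 - p) / (1 - p * w) := by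
    field_simp
    ring
  have e0' : 1 - p * (1 - w) / (1 - p * w) / p = w * (1 - p) / (1 - p * w) := by
    field_simp
    ring
  have e1 : (p * (1 - w) / (1 - p * w)) ^ (a - 1)
      = p ^ (a - 1) * (1 - w) ^ (a - 1) * (1 - p * w) ^ (-(a - 1)) := by
    rw [Real.div_rpow (by positivity) hD.le, Real.mul_rpow hp0.le h1w.le,
      Real.rpow_neg hD.le, div_eq_mul_inv]
  have e2 : ((1 - p) / (1 - p * w)) ^ (-(a + b + 1))
      = (1 - p) ^ (-(a + b + 1)) * (1 - p * w) ^ (a + b + 1) := by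
    rw [Real.div_rpow h1p.le hD.le, Real.rpow_neg h1p.le, Real.rpow_neg hD.le,
      div_eq_mul_inv, inv_inv, ← Real.rpow_neg h1p.le]
  have e3 : (w * (1 - p) / (1 - p * w)) ^ b
      = w ^ b * (1 - p) ^ b * (1 - p * w) ^ (-b) := by
    rw [Real.div_rpow (by positivity) hD.le, Real.mul_rpow hw0.le h1p.le,
      Real.rpow_neg hD.le, div_eq_mul_inv]
  rw [smul_eq_mul, habs, e0, e0', e1, e2, e3]
  have key : p * (1 - p) * (1 - p * w) ^ (-(2:ℝ))
      * (p ^ (a - 1) * (1 - w) ^ (a - 1) * (1 - p * w) ^ (-(a - 1))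
        * ((1 - p) ^ (-(a + b + 1)) * (1 - p * w) ^ (a + b + 1))
        * (w ^ b * (1 - p) ^ b * (1 - p * w) ^ (-b) / b))
      = ((p ^ (1:ℝ) * p ^ (a - 1)) * ((1 - p) ^ (1:ℝ) * (1 - p) ^ (-(a + b + 1)) * (1 - p) ^ b) / b)
        * (w ^ b * (1 - w) ^ (a - 1))
        * ((1 - p * w) ^ (-(2:ℝ)) * (1 - p * w) ^ (-(a - 1)) * (1 - p * w) ^ (a + b + 1)
            * (1 - p * w) ^ (-b)) := by
    rw [Real.rpow_one, Real.rpow_one]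
    ring
  rw [key, ← Real.rpow_add hp0, ← Real.rpow_add h1p, ← Real.rpow_add h1p,
    ← Real.rpow_add hD, ← Real.rpow_add hD, ← Real.rpow_add hD]
  rw [show (1:ℝ) + (a - 1) = a by ring, show (1:ℝ) + -(a + b + 1) + b = -a by ring,
    show -(2:ℝ) + -(a - 1) + (a + b + 1) + -b = 0 by ring, Real.rpow_zero, mul_one]

lemma L3 {a x : ℝ} (hx : 0 < x) :
    ∫ y in Ioo 0 x, (1 - exp (-(x - y))) ^ (a - 1) * (exp y - 1) ^ (-a)
      = ∫ w in Ioo (0:ℝ) 1, w ^ (a - 1) * (1 - w) ^ (-a) := by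
  set c := exp (-x) with hc
  have hc0 : 0 < c := exp_pos _
  have hc1 : c < 1 := exp_lt_one_iff.mpr (by linarith)
  have h1c : 0 < 1 - c := by linarith
  have himg : (fun w : ℝ => -Real.log (c + (1 - c) * w)) '' Ioo 0 1 = Ioo 0 x := by
    ext y
    constructor
    · rintro ⟨w, ⟨hw0, hw1⟩, rfl⟩
      have hz0 : c < c + (1 - c) * w := by nlinarith
      have hz1 : c + (1 - c) * w < 1 := by nlinarith
      have hlog0 : Real.log (c + (1 - c) * w) < 0 := Real.log_neg (by linarith) hz1
      have hlogx : -x < Real.log (c + (1 - c) * w) := by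
        have := Real.log_lt_log hc0 hz0
        rwa [hc, Real.log_exp] at this
      refine ⟨?_, ?_⟩
      · show (0:ℝ) < -Real.log (c + (1 - c) * w)
        linarith
      · show -Real.log (c + (1 - c) * w) < x
        linarith
    · rintro ⟨hy0, hyx⟩
      refine ⟨(exp (-y) - c) / (1 - c), ⟨?_, ?_⟩, ?_⟩
      · apply div_pos _ h1c
        have : c < exp (-y) := by rw [hc]; exact exp_lt_exp.mpr (by linarith)
        linarith
      · rw [div_lt_one h1c]
        have : exp (-y) < 1 := exp_lt_one_iff.mpr (by linarith)
        linarith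
      · show -Real.log (c + (1 - c) * ((exp (-y) - c) / (1 - c))) = y
        rw [mul_div_assoc', mul_comm, mul_div_assoc, div_self h1c.ne', mul_one]
        rw [show c + (exp (-y) - c) = exp (-y) by ring, Real.log_exp]
        ring
  have hder : ∀ w ∈ Ioo (0:ℝ) 1, HasDerivWithinAt (fun w : ℝ => -Real.log (c + (1 - c) * w))
      (-((1 - c) / (c + (1 - c) * w))) (Ioo 0 1) w := by
    rintro w ⟨hw0, hw1⟩
    have hz : 0 < c + (1 - c) * w := by nlinarith
    have hlin : HasDerivAt (fun w : ℝ => c + (1 - c) * w) (1 - c) w := by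
      simpa using ((hasDerivAt_id w).const_mul (1 - c)).const_add c
    exact ((hlin.log hz.ne').neg).hasDerivWithinAt
  have hinj : InjOn (fun w : ℝ => -Real.log (c + (1 - c) * w)) (Ioo 0 1) := by
    rintro w1 ⟨h10, h11⟩ w2 ⟨h20, h21⟩ h
    have hz1 : 0 < c + (1 - c) * w1 := by nlinarith
    have hz2 : 0 < c + (1 - c) * w2 := by nlinarith
    simp only [neg_inj] at h
    have := Real.log_injOn_pos (mem_Ioi.mpr hz1) (mem_Ioi.mpr hz2) h
    have h' : (1 - c) * w1 = (1 - c) * w2 := by linarith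
    exact mul_left_cancel₀ h1c.ne' h'
  rw [← himg, integral_image_eq_integral_abs_deriv_smul measurableSet_Ioo hder hinj]
  refine setIntegral_congr_fun measurableSet_Ioo (fun w hw => ?_)
  obtain ⟨hw0, hw1⟩ := hw
  have hzpos : 0 < c + (1 - c) * w := by nlinarith
  have hzlt : c + (1 - c) * w < 1 := by nlinarith
  set z := c + (1 - c) * w with hzdef
  clear_value z
  have h1w : 0 < 1 - w := by linarith
  have hey : exp (-Real.log z) = z⁻¹ := by rw [Real.exp_neg, Real.exp_log hzpos]
  have e1 : 1 - exp (-(x - -Real.log z)) = (1 - c) * w / z := by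
    have he : exp (-(x - -Real.log z)) = c * z⁻¹ := by
      rw [show -(x - -Real.log z) = -x + -Real.log z by ring, Real.exp_add, hey, ← hc]
    rw [he]
    rw [eq_div_iff hzpos.ne', sub_mul, mul_assoc, inv_mul_cancel₀ hzpos.ne', mul_one, hzdef]
    ring
  have e2 : exp (-Real.log z) - 1 = (1 - c) * (1 - w) / z := by
    rw [hey, show (1 - c) * (1 - w) = 1 - z by rw [hzdef]; ring]
    rw [eq_div_iff hzpos.ne', sub_mul, inv_mul_cancel₀ hzpos.ne', one_mul]
  have habs : |(-((1 - c) / z))| = (1 - c) * z ^ (-(1:ℝ)) := by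
    rw [abs_neg, abs_of_pos (div_pos h1c hzpos), Real.rpow_neg_one, div_eq_mul_inv]
  rw [smul_eq_mul, habs, e1, e2]
  have e3 : ((1 - c) * w / z) ^ (a - 1) = (1 - c) ^ (a - 1) * w ^ (a - 1) * z ^ (-(a - 1)) := by
    rw [Real.div_rpow (by positivity) hzpos.le, Real.mul_rpow h1c.le hw0.le,
      Real.rpow_neg hzpos.le, div_eq_mul_inv]
  have e4 : ((1 - c) * (1 - w) / z) ^ (-a) = (1 - c) ^ (-a) * (1 - w) ^ (-a) * z ^ a := by
    rw [Real.div_rpow (by positivity) hzpos.le, Real.mul_rpow h1c.le h1w.le,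
      Real.rpow_neg hzpos.le a, div_inv_eq_mul]
  rw [e3, e4]
  have key : (1 - c) * z ^ (-(1:ℝ))
      * ((1 - c) ^ (a - 1) * w ^ (a - 1) * z ^ (-(a - 1))
        * ((1 - c) ^ (-a) * (1 - w) ^ (-a) * z ^ a))
      = (((1 - c) ^ (1:ℝ) * (1 - c) ^ (a - 1) * (1 - c) ^ (-a))
          * (z ^ (-(1:ℝ)) * z ^ (-(a - 1)) * z ^ a)) * (w ^ (a - 1) * (1 - w) ^ (-a)) := by
    rw [Real.rpow_one]
    ring
  rw [key, ← Real.rpow_add h1c, ← Real.rpow_add h1c, ← Real.rpow_add hzpos,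
    ← Real.rpow_add hzpos,
    show (1:ℝ) + (a - 1) + -a = 0 by ring, show -(1:ℝ) + -(a - 1) + a = 0 by ring,
    Real.rpow_zero, Real.rpow_zero, one_mul, one_mul]

lemma L2 {a b y : ℝ} (ha : 0 < a) (hb : 0 < b) (hb1 : b < 1) (hy : 0 < y) :
    ∫ v in Ioi y, (1 - exp (-(v - y))) ^ (b - 1) * (exp (-(v - y)) *
        ∫ t in Ioo 0 (exp (-v)), t ^ (a - 1) * (1 - t) ^ (-(a + b + 1)))
      = Gamma a * Gamma b / Gamma (a + b + 1) * (exp y - 1) ^ (-a) := by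
  have hp0 : 0 < exp (-y) := exp_pos _
  have hp1 : exp (-y) < 1 := exp_lt_one_iff.mpr (by linarith)
  set p := exp (-y) with hp
  set g : ℝ → ℝ := fun t => t ^ (a - 1) * (1 - t) ^ (-(a + b + 1)) with hgdef
  set h : ℝ → ℝ := fun v => (1 - exp (-(v - y))) ^ (b - 1) * exp (-(v - y)) with hhdef
  have hgm : Measurable g := Mg
  have hgnn : ∀ t ∈ Ioo (0:ℝ) 1, 0 ≤ g t := fun t ht =>
    mul_nonneg (Real.rpow_nonneg ht.1.le _) (Real.rpow_nonneg (by linarith [ht.2]) _)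
  have hgint : ∀ z : ℝ, z < 1 → IntegrableOn g (Ioo 0 z) :=
    fun z hz => int_g_s12 ha (by linarith) hz
  have hhm : Measurable h := by rw [hhdef]; fun_prop
  have hhnn : ∀ v, y ≤ v → 0 ≤ h v := by
    intro v hv
    have : exp (-(v - y)) ≤ 1 := exp_le_one_iff.mpr (by linarith)
    exact mul_nonneg (Real.rpow_nonneg (by linarith) _) (exp_pos _).le
  -- the inner lintegral function
  set Fl : ℝ → ℝ≥0∞ := fun v => ∫⁻ t in Ioo 0 (exp (-v)), ENNReal.ofReal (g t) with hFldef
  have hexp1 : ∀ v, y < v → exp (-v) < 1 := fun v hv => exp_lt_one_iff.mpr (by linarith)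
  have hFl_eq : ∀ v, y < v → Fl v = ENNReal.ofReal (∫ t in Ioo 0 (exp (-v)), g t) := by
    intro v hv
    simp only [hFldef]
    refine (ofReal_integral_eq_lintegral_ofReal (hgint _ (hexp1 v hv)) ?_).symm
    filter_upwards [self_mem_ae_restrict measurableSet_Ioo] with t ht
    exact hgnn t ⟨ht.1, lt_of_lt_of_le ht.2 (hexp1 v hv).le⟩
  -- product measurability
  set S : Set (ℝ × ℝ) := {q : ℝ × ℝ | 0 < q.2 ∧ q.2 < exp (-q.1)} with hSdef
  have hS : MeasurableSet S := by
    have h1 : IsOpen {q : ℝ × ℝ | 0 < q.2} := isOpen_lt continuous_const continuous_snd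
    have h2 : IsOpen {q : ℝ × ℝ | q.2 < exp (-q.1)} :=
      isOpen_lt continuous_snd (Real.continuous_exp.comp continuous_fst.neg)
    exact (h1.inter h2).measurableSet
  set k : ℝ × ℝ → ℝ≥0∞ :=
    fun q => ENNReal.ofReal (h q.1)
      * S.indicator (fun q : ℝ × ℝ => ENNReal.ofReal (g q.2)) q with hkdef
  have hkm : Measurable k := by
    apply Measurable.mul
    · fun_prop
    · exact Measurable.indicator (by fun_prop) hS
  have hk_slice : ∀ v t : ℝ,
      ENNReal.ofReal (h v)
        * (Ioo (0:ℝ) (exp (-v))).indicator (fun t => ENNReal.ofReal (g t)) t = k (v, t) := by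
    intro v t
    rfl
  -- step: Bochner to lintegral
  have hmain : ∫ v in Ioi y, (1 - exp (-(v - y))) ^ (b - 1) * (exp (-(v - y)) *
        ∫ t in Ioo 0 (exp (-v)), g t)
      = (∫⁻ v in Ioi y, ENNReal.ofReal (h v * ∫ t in Ioo 0 (exp (-v)), g t)).toReal := by
    rw [integral_eq_lintegral_of_nonneg_ae]
    · apply congrArg
      refine setLIntegral_congr_fun measurableSet_Ioi (fun v hv => ?_)
      congr 1
      simp only [hhdef]
      ring
    · filter_upwards [self_mem_ae_restrict measurableSet_Ioi] with v hv
      have hvy : y < v := hv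
      have hGnn : 0 ≤ ∫ t in Ioo 0 (exp (-v)), g t :=
        setIntegral_nonneg measurableSet_Ioo fun t ht =>
          hgnn t ⟨ht.1, lt_of_lt_of_le ht.2 (hexp1 v hvy).le⟩
      have he1 : exp (-(v - y)) ≤ 1 := exp_le_one_iff.mpr (by linarith)
      exact mul_nonneg (Real.rpow_nonneg (by linarith) _)
        (mul_nonneg (exp_pos _).le hGnn)
    · -- AEStronglyMeasurable
      have hmeas : Measurable fun v => h v * (Fl v).toReal := by
        apply hhm.mul
        apply ENNReal.measurable_toReal.comp
        rw [hFldef]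
        simp only [← lintegral_indicator measurableSet_Ioo]
        have : (fun v => ∫⁻ t, (Ioo (0:ℝ) (exp (-v))).indicator
            (fun t => ENNReal.ofReal (g t)) t)
            = fun v => ∫⁻ t, (fun q : ℝ × ℝ => S.indicator
                (fun q : ℝ × ℝ => ENNReal.ofReal (g q.2)) q) (v, t) := by
          rfl
        rw [this]
        exact Measurable.lintegral_prod_right' (Measurable.indicator (by fun_prop) hS)
      apply hmeas.aestronglyMeasurable.congr
      rw [Filter.eventuallyEq_iff_exists_mem]
      refine ⟨Ioi y, self_mem_ae_restrict measurableSet_Ioi, fun v hv => ?_⟩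
      show h v * (Fl v).toReal
        = (1 - exp (-(v - y))) ^ (b - 1) * (exp (-(v - y)) * ∫ t in Ioo 0 (exp (-v)), g t)
      rw [hFl_eq v hv, ENNReal.toReal_ofReal (setIntegral_nonneg measurableSet_Ioo
        fun t ht => hgnn t ⟨ht.1, lt_of_lt_of_le ht.2 (hexp1 v hv).le⟩), hhdef]
      ring
  rw [hmain]
  -- now compute the lintegral
  have hswap : ∫⁻ v in Ioi y, ENNReal.ofReal (h v * ∫ t in Ioo 0 (exp (-v)), g t)
      = ∫⁻ t, ∫⁻ v in Ioi y, k (v, t) := by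
    rw [← lintegral_lintegral_swap (by exact hkm.aemeasurable)]
    refine setLIntegral_congr_fun measurableSet_Ioi (fun v hv => ?_)
    have hGnn : 0 ≤ ∫ t in Ioo 0 (exp (-v)), g t :=
      setIntegral_nonneg measurableSet_Ioo fun t ht =>
        hgnn t ⟨ht.1, lt_of_lt_of_le ht.2 (hexp1 v hv).le⟩
    have hvy : y < v := hv
    rw [ENNReal.ofReal_mul (hhnn v (le_of_lt hvy)), ← hFl_eq v hvy]
    simp only [hFldef]
    rw [← lintegral_indicator measurableSet_Ioo,
      ← lintegral_const_mul' _ _ ENNReal.ofReal_ne_top]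
    rfl
  rw [hswap]
  have h1p : 0 < 1 - p := by linarith
  -- evaluate the inner integral
  have hinner : ∀ t : ℝ, (∫⁻ v in Ioi y, k (v, t))
      = (Ioo 0 p).indicator (fun t => ENNReal.ofReal (g t * ((1 - t / p) ^ b / b))) t := by
    intro t
    by_cases hmem : t ∈ Ioo 0 p
    · obtain ⟨ht0, htp⟩ := hmem
      have hym : y < -Real.log t := by
        have := Real.log_lt_log ht0 htp
        rw [hp, Real.log_exp] at this
        linarith
      set m := -Real.log t with hm
      have hkv : ∀ v : ℝ, k (v, t)
          = (Iio m).indicator (fun v => ENNReal.ofReal (h v) * ENNReal.ofReal (g t)) v := by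
        intro v
        by_cases hvm : v < m
        · have htv : t < exp (-v) := by
            have : Real.log t < -v := by rw [hm] at hvm; linarith
            have := Real.exp_lt_exp.mpr this
            rwa [Real.exp_log ht0] at this
          have hmemS : (v, t) ∈ S := ⟨ht0, htv⟩
          rw [hkdef]
          simp only [Set.indicator_of_mem hmemS, Set.indicator_of_mem (mem_Iio.mpr hvm)]
        · have htv : ¬ t < exp (-v) := by
            have hvm' : m ≤ v := not_lt.mp hvm
            have : -v ≤ Real.log t := by rw [hm] at hvm'; linarith
            have := Real.exp_le_exp.mpr this
            rw [Real.exp_log ht0] at this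
            linarith
          have hnot : (v, t) ∉ S := fun hc => htv hc.2
          rw [hkdef]
          simp only [Set.indicator_of_notMem hnot, mul_zero]
          exact (Set.indicator_of_notMem (s := Iio m) (a := v) (by simpa using hvm)
            (fun v => ENNReal.ofReal (h v) * ENNReal.ofReal (g t))).symm
      rw [lintegral_congr hkv, lintegral_indicator measurableSet_Iio,
        Measure.restrict_restrict measurableSet_Iio, Set.Iio_inter_Ioi,
        lintegral_mul_const' _ _ ENNReal.ofReal_ne_top]
      have hvint := vint hb hym
      have hhint : IntegrableOn h (Ioo y m) := hvint.1
      have hlih : ∫⁻ v in Ioo y m, ENNReal.ofReal (h v)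
          = ENNReal.ofReal ((1 - exp (-(m - y))) ^ b / b) := by
        rw [← ofReal_integral_eq_lintegral_ofReal hhint ?_]
        · exact congrArg ENNReal.ofReal hvint.2
        · filter_upwards [self_mem_ae_restrict measurableSet_Ioo] with v hv
          exact hhnn v hv.1.le
      rw [hlih]
      have hexpm : exp (-(m - y)) = t / p := by
        rw [hm, show -(-Real.log t - y) = Real.log t + y by ring, Real.exp_add,
          Real.exp_log ht0, hp, Real.exp_neg, div_inv_eq_mul]
      rw [hexpm, Set.indicator_of_mem (mem_Ioo.mpr ⟨ht0, htp⟩),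
        ← ENNReal.ofReal_mul (div_nonneg (Real.rpow_nonneg (by
          have htp1 : t / p < 1 := (div_lt_one hp0).mpr htp
          linarith) _) hb.le), mul_comm ((1 - t / p) ^ b / b)]
    · rw [Set.indicator_of_notMem hmem]
      have hzero : ∀ v ∈ Ioi y, k (v, t) = 0 := by
        intro v hv
        have hnot : (v, t) ∉ S := by
          intro hc
          apply hmem
          refine ⟨hc.1, ?_⟩
          have : exp (-v) < exp (-y) := Real.exp_lt_exp.mpr (by
            have : y < v := hv
            linarith)
          rw [← hp] at this
          exact lt_trans hc.2 this
        rw [hkdef]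
        simp only [Set.indicator_of_notMem hnot, mul_zero]
      rw [setLIntegral_congr_fun measurableSet_Ioi hzero, lintegral_zero]
  rw [lintegral_congr hinner, lintegral_indicator measurableSet_Ioo]
  -- integrability of the reduced integrand
  have hb1lt : ∀ t ∈ Ioo (0:ℝ) p, (1 - t / p) ^ b ≤ 1 := by
    intro t ht
    apply Real.rpow_le_one _ _ hb.le
    · have : t / p < 1 := (div_lt_one hp0).mpr ht.2
      linarith
    · have : 0 < t / p := div_pos ht.1 hp0
      linarith
  have hGbint : IntegrableOn (fun t => g t * ((1 - t / p) ^ b / b)) (Ioo 0 p) := by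
    refine Integrable.mono' ((hgint p hp1).mul_const (1 / b))
      ((hgm.mul (by fun_prop)).aestronglyMeasurable.restrict) ?_
    filter_upwards [self_mem_ae_restrict measurableSet_Ioo] with t ht
    have hgt : 0 ≤ g t := hgnn t ⟨ht.1, lt_trans ht.2 hp1⟩
    have hfac : 0 ≤ (1 - t / p) ^ b := Real.rpow_nonneg (by
      have : t / p < 1 := (div_lt_one hp0).mpr ht.2
      linarith) _
    rw [Real.norm_eq_abs, abs_of_nonneg (by positivity)]
    have hle : (1 - t / p) ^ b / b ≤ 1 / b := by
      gcongr
      exact hb1lt t ht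
    exact mul_le_mul_of_nonneg_left hle hgt
  have hGbnn : 0 ≤ᵐ[volume.restrict (Ioo 0 p)] fun t => g t * ((1 - t / p) ^ b / b) := by
    filter_upwards [self_mem_ae_restrict measurableSet_Ioo] with t ht
    have hgt : 0 ≤ g t := hgnn t ⟨ht.1, lt_trans ht.2 hp1⟩
    have hfac : 0 ≤ (1 - t / p) ^ b := Real.rpow_nonneg (by
      have : t / p < 1 := (div_lt_one hp0).mpr ht.2
      linarith) _
    positivity
  rw [← ofReal_integral_eq_lintegral_ofReal hGbint hGbnn,
    ENNReal.toReal_ofReal (integral_nonneg_of_ae hGbnn)]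
  have hmoeb := moebius (a := a) (b := b) hp0 hp1
  rw [hgdef]
  simp only
  rw [hmoeb]
  have hbeta := beta_real (s := b + 1) (t := a) (by linarith) ha
  simp only [add_sub_cancel_right] at hbeta
  rw [hbeta]
  -- final algebra
  have hq : exp y - 1 = (1 - p) / p := by
    rw [eq_div_iff hp0.ne', hp, sub_mul, ← Real.exp_add, add_neg_cancel, Real.exp_zero, one_mul]
  have hpow : (exp y - 1) ^ (-a) = (1 - p) ^ (-a) * p ^ a := by
    rw [hq, Real.div_rpow h1p.le hp0.le, Real.rpow_neg hp0.le, div_inv_eq_mul]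
  rw [hpow, show b + 1 + a = a + b + 1 by ring, Real.Gamma_add_one hb.ne']
  have hGpos : (0:ℝ) < Gamma (a + b + 1) := Real.Gamma_pos_of_pos (by linarith)
  field_simp

theorem statement12 (a b x : ℝ) (ha : 0 < a) (ha1 : a < 1) (hb : 0 < b) (hb1 : b < 1)
    (hx : 0 < x) :
    (∫ y in Ioo (0:ℝ) x, ∫ v in Ioi y, ∫ u in Ioi (0:ℝ),
        (1 - Real.exp (-(x - y))) ^ (a - 1) * (1 - Real.exp (-(v - y))) ^ (b - 1)
          * Real.exp (-(v - y)) * Real.exp ((b + 1) * (u + v))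
          * (Real.exp (u + v) - 1) ^ (-(a + b + 1)))
      = π * Gamma a * Gamma b / (Real.sin (π * a) * Gamma (a + b + 1)) := by
  have hGpos : (0:ℝ) < Gamma (a + b + 1) := Real.Gamma_pos_of_pos (by linarith)
  have hsin : 0 < Real.sin (π * a) := by
    apply Real.sin_pos_of_pos_of_lt_pi
    · exact mul_pos Real.pi_pos ha
    · nlinarith [Real.pi_pos]
  have step1 : (∫ y in Ioo (0:ℝ) x, ∫ v in Ioi y, ∫ u in Ioi (0:ℝ),
        (1 - Real.exp (-(x - y))) ^ (a - 1) * (1 - Real.exp (-(v - y))) ^ (b - 1)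
          * Real.exp (-(v - y)) * Real.exp ((b + 1) * (u + v))
          * (Real.exp (u + v) - 1) ^ (-(a + b + 1)))
      = ∫ y in Ioo (0:ℝ) x, (1 - Real.exp (-(x - y))) ^ (a - 1) *
          (Gamma a * Gamma b / Gamma (a + b + 1) * (Real.exp y - 1) ^ (-a)) := by
    refine setIntegral_congr_fun measurableSet_Ioo (fun y hy => ?_)
    obtain ⟨hy0, hyx⟩ := hy
    rw [← L2 ha hb hb1 hy0, ← integral_const_mul]
    refine setIntegral_congr_fun measurableSet_Ioi (fun v hv => ?_)
    have hv0 : (0:ℝ) ≤ v := le_of_lt (lt_trans hy0 hv)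
    rw [← L1 (a := a) (b := b) hv0, ← integral_const_mul, ← integral_const_mul,
      ← integral_const_mul]
    refine setIntegral_congr_fun measurableSet_Ioi (fun u hu => ?_)
    ring
  rw [step1]
  have step2 : ∫ y in Ioo (0:ℝ) x, (1 - Real.exp (-(x - y))) ^ (a - 1) *
        (Gamma a * Gamma b / Gamma (a + b + 1) * (Real.exp y - 1) ^ (-a))
      = Gamma a * Gamma b / Gamma (a + b + 1) *
        ∫ y in Ioo (0:ℝ) x, (1 - Real.exp (-(x - y))) ^ (a - 1) * (Real.exp y - 1) ^ (-a) := by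
    rw [← integral_const_mul]
    refine setIntegral_congr_fun measurableSet_Ioo (fun y hy => ?_)
    ring
  rw [step2, L3 hx]
  have hbeta := beta_real ha (show (0:ℝ) < 1 - a by linarith)
  rw [show (1:ℝ) - a - 1 = -a by ring, show a + (1 - a) = (1:ℝ) by ring,
    Real.Gamma_one, div_one] at hbeta
  rw [hbeta, Real.Gamma_mul_Gamma_one_sub]
  field_simp
end

section
/- For all real numbers a, b with 0 < a < 1, 0 < b < 1, and every x > 0, the quadruple integral ∫₀^∞ ∫₀^{x+v} ∫₀^∞ ∫₀^w (1 − e^{−(x+v−y)})^{a−1} (1 − e^{−v})^{b−1} (1 − e^{−(w−u)})^{b−1} e^{−v−w+u} e^{(b+1)(y+w)} (e^{y+w} − 1)^{−(a+b+1)} du dw dy dv (integrating over v > 0, 0 ≤ y < x+v, 0 < u ≤ w) equals π Γ(a) Γ(b) / (b sin(πa) Γ(a+b+1)). -/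
open MeasureTheory Real Set


lemma realBeta_s13 (s t : ℝ) (hs : 0 < s) (ht : 0 < t) :
    ∫ x in Ioo (0:ℝ) 1, x ^ (s - 1) * (1 - x) ^ (t - 1) = Gamma s * Gamma t / Gamma (s + t) := by
  have key := Complex.Gamma_mul_Gamma_eq_betaIntegral (s := (s:ℂ)) (t := (t:ℂ)) (by simpa) (by simpa)
  have hco : ∫ x in Ioc (0:ℝ) 1, ((x ^ (s-1) * (1-x) ^ (t-1) : ℝ) : ℂ)
      = ((∫ x in Ioc (0:ℝ) 1, x ^ (s-1) * (1-x) ^ (t-1) : ℝ) : ℂ) := integral_ofReal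
  have hbeta : Complex.betaIntegral s t = ((∫ x in Ioo (0:ℝ) 1, x ^ (s - 1) * (1 - x) ^ (t - 1) : ℝ) : ℂ) := by
    rw [Complex.betaIntegral, intervalIntegral.integral_of_le zero_le_one,
      ← MeasureTheory.integral_Ioc_eq_integral_Ioo, ← hco]
    refine setIntegral_congr_fun measurableSet_Ioc fun x hx => ?_
    rw [Complex.ofReal_mul, Complex.ofReal_cpow hx.1.le, Complex.ofReal_cpow (by linarith [hx.2] : (0:ℝ) ≤ 1 - x)]
    push_cast
    ring
  rw [hbeta, ← Complex.ofReal_add, Complex.Gamma_ofReal, Complex.Gamma_ofReal,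
    Complex.Gamma_ofReal, ← Complex.ofReal_mul, ← Complex.ofReal_mul] at key
  have h2 := Complex.ofReal_injective key
  have hG : Gamma (s + t) ≠ 0 := (Gamma_pos_of_pos (by linarith)).ne'
  field_simp
  linarith [h2]

lemma powInt (c : ℝ) (hc : 0 < c) : ∫ x in Ioo (0:ℝ) 1, x ^ (c - 1) = 1 / c := by
  have h := realBeta_s13 c 1 hc one_pos
  simp only [sub_self, Real.rpow_zero, mul_one, Real.Gamma_one] at h
  rw [h, Real.Gamma_add_one hc.ne']
  rw [mul_comm]
  field_simp



lemma lemA (c : ℝ) (hc : 0 < c) :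
    ∫ v in Ioi (0:ℝ), (1 - Real.exp (-v)) ^ (c - 1) * Real.exp (-v) = 1 / c := by
  have himg : (fun t : ℝ => -Real.log (1 - t)) '' Ioo (0:ℝ) 1 = Ioi 0 := by
    ext v
    constructor
    · rintro ⟨t, ht, rfl⟩
      have := Real.log_neg (x := 1 - t) (by linarith [ht.2]) (by linarith [ht.1])
      simpa using this
    · intro hv
      have hv' : 0 < v := mem_Ioi.mp hv
      have h1 : Real.exp (-v) < 1 := Real.exp_lt_one_iff.mpr (by linarith)
      refine ⟨1 - Real.exp (-v), ⟨by linarith, by linarith [Real.exp_pos (-v)]⟩, by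
        simp [Real.log_exp]⟩
  have hderiv : ∀ t ∈ Ioo (0:ℝ) 1, HasDerivWithinAt (fun t : ℝ => -Real.log (1 - t))
      (1 / (1 - t)) (Ioo (0:ℝ) 1) t := by
    intro t ht
    have h1 : (0:ℝ) < 1 - t := by linarith [ht.2]
    have h := (((Real.hasDerivAt_log h1.ne').comp t ((hasDerivAt_id t).const_sub 1)).neg)
    have h2 : HasDerivAt (fun t : ℝ => -Real.log (1 - t)) (1 / (1 - t)) t := by
      exact h.congr_deriv (by ring)
    exact h2.hasDerivWithinAt
  have hinj : InjOn (fun t : ℝ => -Real.log (1 - t)) (Ioo (0:ℝ) 1) := by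
    intro p hp q hq h
    simp only [neg_inj] at h
    have := Real.log_injOn_pos (mem_Ioi.mpr (by linarith [hp.2] : (0:ℝ) < 1 - p))
      (mem_Ioi.mpr (by linarith [hq.2] : (0:ℝ) < 1 - q)) h
    linarith
  rw [← himg, integral_image_eq_integral_abs_deriv_smul measurableSet_Ioo hderiv hinj,
    ← powInt c hc]
  refine setIntegral_congr_fun measurableSet_Ioo fun t ht => ?_
  have h1 : (0:ℝ) < 1 - t := by linarith [ht.2]
  have he : Real.exp (-(-Real.log (1 - t))) = 1 - t := by rw [neg_neg, Real.exp_log h1]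
  rw [smul_eq_mul, he, abs_of_pos (by positivity : (0:ℝ) < 1 / (1 - t))]
  have : (1 : ℝ) - (1 - t) = t := by ring
  rw [this]
  field_simp



lemma lemB (b w : ℝ) (hb : 0 < b) (hw : 0 < w) :
    ∫ u in Ioo (0:ℝ) w, (1 - Real.exp (-(w - u))) ^ (b - 1) * Real.exp u
      = Real.exp w * (1 - Real.exp (-w)) ^ b / b := by
  set K := 1 - Real.exp (-w) with hKdef
  have hew : Real.exp (-w) < 1 := Real.exp_lt_one_iff.mpr (by linarith)
  have hK : 0 < K := by simp only [hKdef]; linarith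
  have hK1 : K < 1 := by simp only [hKdef]; linarith [Real.exp_pos (-w)]
  have hL : ∀ t : ℝ, t ∈ Ioo (0:ℝ) 1 → 0 < 1 - K * t := by
    intro t ht
    nlinarith [ht.1, ht.2]
  have himg : (fun t : ℝ => w + Real.log (1 - K * t)) '' Ioo (0:ℝ) 1 = Ioo 0 w := by
    ext u
    constructor
    · rintro ⟨t, ht, rfl⟩
      have h0 : (0:ℝ) < 1 - K * t := hL t ht
      have hlt1 : 1 - K * t < 1 := by nlinarith [ht.1, ht.2]
      have hgt : Real.exp (-w) < 1 - K * t := by nlinarith [ht.1, ht.2, Real.exp_pos (-w)]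
      have h1 : Real.log (1 - K * t) < 0 := Real.log_neg h0 hlt1
      have h2 : -w < Real.log (1 - K * t) := by
        have := Real.log_lt_log (Real.exp_pos (-w)) hgt
        simpa [Real.log_exp] using this
      exact ⟨by show 0 < w + Real.log (1 - K * t); linarith,
        by show w + Real.log (1 - K * t) < w; linarith⟩
    · intro hu
      obtain ⟨hu0, huw⟩ := hu
      have he1 : Real.exp (u - w) < 1 := Real.exp_lt_one_iff.mpr (by linarith)
      have he2 : Real.exp (-w) < Real.exp (u - w) := Real.exp_lt_exp.mpr (by linarith)
      refine ⟨(1 - Real.exp (u - w)) / K, ⟨div_pos (by linarith) hK, by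
        rw [div_lt_one hK]; simp only [hKdef]; linarith⟩, ?_⟩
      have h3 : 1 - K * ((1 - Real.exp (u - w)) / K) = Real.exp (u - w) := by
        field_simp
        ring
      show w + Real.log (1 - K * ((1 - Real.exp (u - w)) / K)) = u
      rw [h3, Real.log_exp]
      ring
  have hderiv : ∀ t ∈ Ioo (0:ℝ) 1, HasDerivWithinAt (fun t : ℝ => w + Real.log (1 - K * t))
      (-(K / (1 - K * t))) (Ioo (0:ℝ) 1) t := by
    intro t ht
    have h0 := hL t ht
    have hin : HasDerivAt (fun t : ℝ => 1 - K * t) (-K) t := by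
      simpa using ((hasDerivAt_id t).const_mul K).const_sub 1
    have h := ((Real.hasDerivAt_log h0.ne').comp t hin).const_add w
    have h2 : HasDerivAt (fun t : ℝ => w + Real.log (1 - K * t)) (-(K / (1 - K * t))) t := by
      exact h.congr_deriv (by ring)
    exact h2.hasDerivWithinAt
  have hinj : InjOn (fun t : ℝ => w + Real.log (1 - K * t)) (Ioo (0:ℝ) 1) := by
    intro p hp q hq h
    simp only [add_right_inj] at h
    have := Real.log_injOn_pos (mem_Ioi.mpr (hL p hp)) (mem_Ioi.mpr (hL q hq)) h
    have hKne : K ≠ 0 := hK.ne'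
    exact mul_left_cancel₀ hKne (by linarith)
  rw [← himg, integral_image_eq_integral_abs_deriv_smul measurableSet_Ioo hderiv hinj]
  have hcong : ∀ t ∈ Ioo (0:ℝ) 1,
      |(-(K / (1 - K * t)))| • ((1 - Real.exp (-(w - (w + Real.log (1 - K * t))))) ^ (b - 1)
        * Real.exp (w + Real.log (1 - K * t)))
      = Real.exp w * K ^ b * t ^ (b - 1) := by
    intro t ht
    have h0 := hL t ht
    have habs : |(-(K / (1 - K * t)))| = K / (1 - K * t) := by
      rw [abs_neg, abs_of_pos (by positivity)]
    have hexp : Real.exp (w + Real.log (1 - K * t)) = Real.exp w * (1 - K * t) := by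
      rw [Real.exp_add, Real.exp_log h0]
    have harg : -(w - (w + Real.log (1 - K * t))) = Real.log (1 - K * t) := by ring
    rw [smul_eq_mul, habs, hexp, harg, Real.exp_log h0]
    have h1 : (1:ℝ) - (1 - K * t) = K * t := by ring
    rw [h1, Real.mul_rpow hK.le ht.1.le]
    have hKb : K ^ (b - 1) * K = K ^ b := by
      rw [← Real.rpow_add_one hK.ne' (b - 1)]
      norm_num
    rw [← hKb]
    field_simp
  rw [setIntegral_congr_fun measurableSet_Ioo hcong]
  simp_rw [mul_assoc]
  rw [MeasureTheory.integral_const_mul, MeasureTheory.integral_const_mul, powInt b hb]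
  field_simp



lemma lemD (a z : ℝ) (ha : 0 < a) (ha1 : a < 1) (hz : 0 < z) :
    ∫ y in Ioo (0:ℝ) z, (1 - Real.exp (-(z - y))) ^ (a - 1) * (Real.exp y - 1) ^ (-a)
      = π / Real.sin (π * a) := by
  set q := Real.exp (-z) with hqdef
  have hq0 : 0 < q := Real.exp_pos _
  have hq1 : q < 1 := Real.exp_lt_one_iff.mpr (by linarith)
  have hE : ∀ r : ℝ, r ∈ Ioo (0:ℝ) 1 → 0 < q + (1 - q) * r := by
    intro r hr; nlinarith [hr.1, hr.2]
  have hE1 : ∀ r : ℝ, r ∈ Ioo (0:ℝ) 1 → q + (1 - q) * r < 1 := by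
    intro r hr; nlinarith [hr.1, hr.2]
  have himg : (fun r : ℝ => -Real.log (q + (1 - q) * r)) '' Ioo (0:ℝ) 1 = Ioo 0 z := by
    ext y
    constructor
    · rintro ⟨r, hr, rfl⟩
      have h0 := hE r hr
      have h1 := hE1 r hr
      have hgt : q < q + (1 - q) * r := by nlinarith [hr.1, hr.2]
      have hl1 : Real.log (q + (1 - q) * r) < 0 := Real.log_neg h0 h1
      have hl2 : -z < Real.log (q + (1 - q) * r) := by
        have := Real.log_lt_log hq0 hgt
        simpa [hqdef, Real.log_exp] using this
      exact ⟨by show 0 < -Real.log (q + (1 - q) * r); linarith,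
        by show -Real.log (q + (1 - q) * r) < z; linarith⟩
    · intro hy
      obtain ⟨hy0, hyz⟩ := hy
      have he1 : Real.exp (-y) < 1 := Real.exp_lt_one_iff.mpr (by linarith)
      have he2 : q < Real.exp (-y) := by
        rw [hqdef]; exact Real.exp_lt_exp.mpr (by linarith)
      refine ⟨(Real.exp (-y) - q) / (1 - q), ⟨div_pos (by linarith) (by linarith),
        by rw [div_lt_one (by linarith)]; linarith⟩, ?_⟩
      show -Real.log (q + (1 - q) * ((Real.exp (-y) - q) / (1 - q))) = y
      have hne : (1:ℝ) - q ≠ 0 := by linarith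
      have h3 : q + (1 - q) * ((Real.exp (-y) - q) / (1 - q)) = Real.exp (-y) := by
        field_simp
        ring
      rw [h3, Real.log_exp]
      ring
  have hderiv : ∀ r ∈ Ioo (0:ℝ) 1, HasDerivWithinAt (fun r : ℝ => -Real.log (q + (1 - q) * r))
      (-((1 - q) / (q + (1 - q) * r))) (Ioo (0:ℝ) 1) r := by
    intro r hr
    have h0 := hE r hr
    have hin : HasDerivAt (fun r : ℝ => q + (1 - q) * r) (1 - q) r := by
      simpa using ((hasDerivAt_id r).const_mul (1 - q)).const_add q
    have h := ((Real.hasDerivAt_log h0.ne').comp r hin).neg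
    have h2 : HasDerivAt (fun r : ℝ => -Real.log (q + (1 - q) * r))
        (-((1 - q) / (q + (1 - q) * r))) r := by
      exact h.congr_deriv (by ring)
    exact h2.hasDerivWithinAt
  have hinj : InjOn (fun r : ℝ => -Real.log (q + (1 - q) * r)) (Ioo (0:ℝ) 1) := by
    intro p1 hp1 p2 hp2 h
    simp only [neg_inj] at h
    have := Real.log_injOn_pos (mem_Ioi.mpr (hE p1 hp1)) (mem_Ioi.mpr (hE p2 hp2)) h
    have : (1 - q) * p1 = (1 - q) * p2 := by linarith
    have hne : (1 - q) ≠ 0 := by linarith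
    exact mul_left_cancel₀ hne this
  rw [← himg, integral_image_eq_integral_abs_deriv_smul measurableSet_Ioo hderiv hinj]
  have hcong : ∀ r ∈ Ioo (0:ℝ) 1,
      |(-((1 - q) / (q + (1 - q) * r)))| •
        ((1 - Real.exp (-(z - -Real.log (q + (1 - q) * r)))) ^ (a - 1)
          * (Real.exp (-Real.log (q + (1 - q) * r)) - 1) ^ (-a))
      = r ^ (a - 1) * (1 - r) ^ ((1 - a) - 1) := by
    intro r hr
    set E := q + (1 - q) * r with hEdef
    have h0 : 0 < E := hE r hr
    have h1 : E < 1 := hE1 r hr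
    have habs : |(-((1 - q) / E))| = (1 - q) / E := by
      rw [abs_neg, abs_of_pos (div_pos (by linarith) h0)]
    have hexpE : Real.exp (-Real.log E) = E⁻¹ := by
      rw [Real.exp_neg, Real.exp_log h0]
    have h1q : (0:ℝ) < 1 - q := by linarith
    have hr0 : (0:ℝ) < r := hr.1
    have hr1 : (0:ℝ) < 1 - r := by linarith [hr.2]
    have hfact1 : 1 - Real.exp (-(z - -Real.log E)) = (1 - q) * r / E := by
      have harg : -(z - -Real.log E) = -z + -Real.log E := by ring
      rw [harg, Real.exp_add, hexpE, ← hqdef, hEdef]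
      field_simp
      ring
    have hfact2 : Real.exp (-Real.log E) - 1 = (1 - q) * (1 - r) / E := by
      rw [hexpE, hEdef, inv_eq_one_div]
      rw [div_sub' (ne_of_gt h0), div_eq_div_iff (ne_of_gt h0) (ne_of_gt h0)]
      ring
    rw [smul_eq_mul, habs, hfact1, hfact2]
    have hpos1 : (0:ℝ) < (1 - q) * r / E := div_pos (mul_pos h1q hr0) h0
    have hpos2 : (0:ℝ) < (1 - q) * (1 - r) / E := div_pos (mul_pos h1q hr1) h0
    rw [Real.rpow_def_of_pos hpos1, Real.rpow_def_of_pos hpos2,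
      Real.rpow_def_of_pos hr0, Real.rpow_def_of_pos hr1,
      show (1 - q) / E = Real.exp (Real.log (1 - q) - Real.log E) by
        rw [Real.exp_sub, Real.exp_log (by linarith), Real.exp_log h0],
      ← Real.exp_add, ← Real.exp_add, ← Real.exp_add]
    congr 1
    rw [Real.log_div (mul_pos h1q hr0).ne' h0.ne', Real.log_div (mul_pos h1q hr1).ne' h0.ne',
      Real.log_mul h1q.ne' hr0.ne', Real.log_mul h1q.ne' hr1.ne']
    ring
  rw [setIntegral_congr_fun measurableSet_Ioo hcong, realBeta_s13 a (1 - a) ha (by linarith)]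
  have : a + (1 - a) = 1 := by ring
  rw [this, Real.Gamma_one, div_one, Real.Gamma_mul_Gamma_one_sub a]



lemma lemC (a b y : ℝ) (ha : 0 < a) (hb : 0 < b) (hy : 0 < y) :
    ∫ w in Ioi (0:ℝ), (1 - Real.exp (-w)) ^ b * Real.exp (-(a * (y + w)))
        * (1 - Real.exp (-(y + w))) ^ (-(a + b + 1))
      = Gamma a * Gamma (b + 1) / Gamma (a + b + 1) * (Real.exp y - 1) ^ (-a) := by
  set p := Real.exp (-y) with hpdef
  have hp0 : 0 < p := Real.exp_pos _
  have hp1 : p < 1 := Real.exp_lt_one_iff.mpr (by linarith)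
  have h1p : (0:ℝ) < 1 - p := by linarith
  have hD : ∀ s : ℝ, s ∈ Ioo (0:ℝ) 1 → 0 < 1 - p + p * s := by
    intro s hs; nlinarith [hs.1]
  have hDs : ∀ s : ℝ, s ∈ Ioo (0:ℝ) 1 → s < 1 - p + p * s := by
    intro s hs; nlinarith [hs.1, hs.2]
  have himg : (fun s : ℝ => Real.log (1 - p + p * s) - Real.log s) '' Ioo (0:ℝ) 1 = Ioi 0 := by
    ext w
    constructor
    · rintro ⟨s, hs, rfl⟩
      have h0 := hD s hs
      have hlt := Real.log_lt_log hs.1 (hDs s hs)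
      show 0 < Real.log (1 - p + p * s) - Real.log s
      linarith
    · intro hw
      have hw0 : 0 < w := mem_Ioi.mp hw
      have hew : 1 < Real.exp w := by
        have := Real.exp_lt_exp.mpr hw0
        simpa using this
      have hden : 0 < Real.exp w - p := by linarith
      set s := (1 - p) / (Real.exp w - p) with hsdef
      have hs0 : 0 < s := div_pos h1p hden
      have hs1 : s < 1 := by
        rw [hsdef, div_lt_one hden]; linarith
      refine ⟨s, ⟨hs0, hs1⟩, ?_⟩
      show Real.log (1 - p + p * s) - Real.log s = w
      have hDval : 1 - p + p * s = (1 - p) * Real.exp w / (Real.exp w - p) := by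
        rw [hsdef]
        field_simp
        ring
      have hexpinj : Real.exp (Real.log (1 - p + p * s) - Real.log s) = Real.exp w := by
        rw [Real.exp_sub, Real.exp_log (by rw [hDval]; positivity), Real.exp_log hs0,
          hDval, hsdef]
        field_simp
      exact Real.exp_injective hexpinj
  have hderiv : ∀ s ∈ Ioo (0:ℝ) 1, HasDerivWithinAt
      (fun s : ℝ => Real.log (1 - p + p * s) - Real.log s)
      (-((1 - p) / (s * (1 - p + p * s)))) (Ioo (0:ℝ) 1) s := by
    intro s hs
    have h0 := hD s hs
    have hin : HasDerivAt (fun s : ℝ => 1 - p + p * s) p s := by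
      simpa using ((hasDerivAt_id s).const_mul p).const_add (1 - p)
    have h := ((Real.hasDerivAt_log h0.ne').comp s hin).sub (Real.hasDerivAt_log hs.1.ne')
    have h2 : HasDerivAt (fun s : ℝ => Real.log (1 - p + p * s) - Real.log s)
        (-((1 - p) / (s * (1 - p + p * s)))) s := by
      have heq : -((1 - p) / (s * (1 - p + p * s))) = (1 - p + p * s)⁻¹ * p - s⁻¹ := by
        field_simp [hs.1.ne', h0.ne']
        ring
      rw [heq]
      exact h
    exact h2.hasDerivWithinAt
  have hinj : InjOn (fun s : ℝ => Real.log (1 - p + p * s) - Real.log s) (Ioo (0:ℝ) 1) := by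
    intro s1 hs1 s2 hs2 h
    simp only at h
    have e1 : Real.log (1 - p + p * s1) - Real.log s1 = Real.log ((1 - p + p * s1) / s1) :=
      (Real.log_div (hD s1 hs1).ne' hs1.1.ne').symm
    have e2 : Real.log (1 - p + p * s2) - Real.log s2 = Real.log ((1 - p + p * s2) / s2) :=
      (Real.log_div (hD s2 hs2).ne' hs2.1.ne').symm
    rw [e1, e2] at h
    have := Real.log_injOn_pos (mem_Ioi.mpr (div_pos (hD s1 hs1) hs1.1))
      (mem_Ioi.mpr (div_pos (hD s2 hs2) hs2.1)) h
    rw [div_eq_div_iff hs1.1.ne' hs2.1.ne'] at this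
    have hkey : (1 - p) * s2 = (1 - p) * s1 := by nlinarith [this]
    have := mul_left_cancel₀ h1p.ne' hkey
    linarith
  rw [← himg, integral_image_eq_integral_abs_deriv_smul measurableSet_Ioo hderiv hinj]
  have hcong : ∀ s ∈ Ioo (0:ℝ) 1,
      |(-((1 - p) / (s * (1 - p + p * s))))| •
        ((1 - Real.exp (-(Real.log (1 - p + p * s) - Real.log s))) ^ b
          * Real.exp (-(a * (y + (Real.log (1 - p + p * s) - Real.log s))))
          * (1 - Real.exp (-(y + (Real.log (1 - p + p * s) - Real.log s)))) ^ (-(a + b + 1)))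
      = p ^ a * (1 - p) ^ (-a) * (s ^ (a - 1) * (1 - s) ^ ((b + 1) - 1)) := by
    intro s hs
    set D := 1 - p + p * s with hDdef
    have h0 : 0 < D := hD s hs
    have hs0 : 0 < s := hs.1
    have hs1 : (0:ℝ) < 1 - s := by linarith [hs.2]
    have habs : |(-((1 - p) / (s * D)))| = (1 - p) / (s * D) := by
      rw [abs_neg, abs_of_pos (div_pos h1p (mul_pos hs0 h0))]
    have hexpW : Real.exp (-(Real.log D - Real.log s)) = s / D := by
      rw [neg_sub, Real.exp_sub, Real.exp_log hs0, Real.exp_log h0]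
    have hfact1 : 1 - Real.exp (-(Real.log D - Real.log s)) = (1 - p) * (1 - s) / D := by
      rw [hexpW]
      field_simp
      rw [hDdef]; ring
    have hexpYW : Real.exp (-(y + (Real.log D - Real.log s))) = p * s / D := by
      rw [neg_add, Real.exp_add, ← hpdef, hexpW]
      ring
    have hfact2 : 1 - Real.exp (-(y + (Real.log D - Real.log s))) = (1 - p) / D := by
      rw [hexpYW]
      field_simp
      rw [hDdef]; ring
    have hargYW : -(y + (Real.log D - Real.log s)) = Real.log (p * s / D) := by
      rw [← Real.log_exp (-(y + (Real.log D - Real.log s))), hexpYW]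
    have hfact3 : Real.exp (-(a * (y + (Real.log D - Real.log s)))) = (p * s / D) ^ a := by
      rw [Real.rpow_def_of_pos (div_pos (mul_pos hp0 hs0) h0), ← hargYW]
      congr 1
      ring
    rw [smul_eq_mul, habs, hfact1, hfact2, hfact3]
    rw [Real.rpow_def_of_pos (div_pos (mul_pos h1p hs1) h0),
      Real.rpow_def_of_pos (div_pos (mul_pos hp0 hs0) h0),
      Real.rpow_def_of_pos (div_pos h1p h0),
      Real.rpow_def_of_pos hp0, Real.rpow_def_of_pos h1p,
      Real.rpow_def_of_pos hs0, Real.rpow_def_of_pos hs1,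
      show (1 - p) / (s * D) = Real.exp (Real.log (1 - p) - Real.log (s * D)) by
        rw [Real.exp_sub, Real.exp_log h1p, Real.exp_log (mul_pos hs0 h0)]]
    simp only [← Real.exp_add]
    congr 1
    rw [Real.log_div (mul_pos h1p hs1).ne' h0.ne', Real.log_div (mul_pos hp0 hs0).ne' h0.ne',
      Real.log_div h1p.ne' h0.ne', Real.log_mul h1p.ne' hs1.ne', Real.log_mul hp0.ne' hs0.ne',
      Real.log_mul hs0.ne' h0.ne']
    ring
  rw [setIntegral_congr_fun measurableSet_Ioo hcong]
  rw [MeasureTheory.integral_const_mul, realBeta_s13 a (b + 1) ha (by linarith)]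
  have hab : a + (b + 1) = a + b + 1 := by ring
  rw [hab]
  have hfin : (Real.exp y - 1) ^ (-a) = p ^ a * (1 - p) ^ (-a) := by
    have hval : Real.exp y - 1 = (1 - p) / p := by
      rw [hpdef, Real.exp_neg]
      field_simp
    rw [hval, Real.rpow_def_of_pos (div_pos h1p hp0), Real.rpow_def_of_pos hp0,
      Real.rpow_def_of_pos h1p, ← Real.exp_add, Real.log_div h1p.ne' hp0.ne']
    congr 1
    ring
  rw [hfin]
  ring






lemma keyid (a b r : ℝ) (hr : 0 < r) :
    Real.exp ((b + 1) * r) * (Real.exp r - 1) ^ (-(a + b + 1))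
      = Real.exp (-(a * r)) * (1 - Real.exp (-r)) ^ (-(a + b + 1)) := by
  have h1 : Real.exp (-r) < 1 := Real.exp_lt_one_iff.mpr (by linarith)
  have h2 : (0:ℝ) < 1 - Real.exp (-r) := by linarith
  have h3 : (0:ℝ) < Real.exp r - 1 := by
    have := Real.exp_lt_exp.mpr hr
    simp only [Real.exp_zero] at this
    linarith
  have hfac : Real.exp r - 1 = Real.exp r * (1 - Real.exp (-r)) := by
    rw [mul_sub, ← Real.exp_add]
    simp
  rw [Real.rpow_def_of_pos h3, Real.rpow_def_of_pos h2, ← Real.exp_add, ← Real.exp_add,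
    hfac, Real.log_mul (Real.exp_ne_zero r) h2.ne', Real.log_exp]
  congr 1
  ring

theorem statement13 (a b x : ℝ) (ha : 0 < a) (ha1 : a < 1) (hb : 0 < b) (hb1 : b < 1)
    (hx : 0 < x) :
    (∫ v in Ioi (0:ℝ), ∫ y in Ioo (0:ℝ) (x + v), ∫ w in Ioi (0:ℝ), ∫ u in Ioo (0:ℝ) w,
        (1 - Real.exp (-(x + v - y))) ^ (a - 1) * (1 - Real.exp (-v)) ^ (b - 1)
          * (1 - Real.exp (-(w - u))) ^ (b - 1) * Real.exp (-v - w + u)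
          * Real.exp ((b + 1) * (y + w)) * (Real.exp (y + w) - 1) ^ (-(a + b + 1)))
      = π * Gamma a * Gamma b / (b * Real.sin (π * a) * Gamma (a + b + 1)) := by
  set C := Gamma a * Gamma (b + 1) / Gamma (a + b + 1) with hC
  have key : ∀ v ∈ Ioi (0:ℝ),
      (∫ y in Ioo (0:ℝ) (x + v), ∫ w in Ioi (0:ℝ), ∫ u in Ioo (0:ℝ) w,
        (1 - Real.exp (-(x + v - y))) ^ (a - 1) * (1 - Real.exp (-v)) ^ (b - 1)
          * (1 - Real.exp (-(w - u))) ^ (b - 1) * Real.exp (-v - w + u)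
          * Real.exp ((b + 1) * (y + w)) * (Real.exp (y + w) - 1) ^ (-(a + b + 1)))
      = (1 - Real.exp (-v)) ^ (b - 1) * Real.exp (-v) * (C * (π / Real.sin (π * a)) / b) := by
    intro v hv
    have hv0 : (0:ℝ) < v := hv
    have hxv : (0:ℝ) < x + v := by linarith
    have hy : ∀ y ∈ Ioo (0:ℝ) (x + v),
        (∫ w in Ioi (0:ℝ), ∫ u in Ioo (0:ℝ) w,
          (1 - Real.exp (-(x + v - y))) ^ (a - 1) * (1 - Real.exp (-v)) ^ (b - 1)
            * (1 - Real.exp (-(w - u))) ^ (b - 1) * Real.exp (-v - w + u)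
            * Real.exp ((b + 1) * (y + w)) * (Real.exp (y + w) - 1) ^ (-(a + b + 1)))
        = ((1 - Real.exp (-v)) ^ (b - 1) * Real.exp (-v) * (C / b))
          * ((1 - Real.exp (-(x + v - y))) ^ (a - 1) * (Real.exp y - 1) ^ (-a)) := by
      intro y hyy
      have hy0 : (0:ℝ) < y := hyy.1
      have hw : ∀ w ∈ Ioi (0:ℝ),
          (∫ u in Ioo (0:ℝ) w,
            (1 - Real.exp (-(x + v - y))) ^ (a - 1) * (1 - Real.exp (-v)) ^ (b - 1)
              * (1 - Real.exp (-(w - u))) ^ (b - 1) * Real.exp (-v - w + u)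
              * Real.exp ((b + 1) * (y + w)) * (Real.exp (y + w) - 1) ^ (-(a + b + 1)))
          = ((1 - Real.exp (-(x + v - y))) ^ (a - 1) * (1 - Real.exp (-v)) ^ (b - 1)
              * Real.exp (-v) / b)
            * ((1 - Real.exp (-w)) ^ b * Real.exp (-(a * (y + w)))
              * (1 - Real.exp (-(y + w))) ^ (-(a + b + 1))) := by
        intro w hw0
        have hw0' : (0:ℝ) < w := hw0
        have hptr : ∀ u : ℝ,
            (1 - Real.exp (-(x + v - y))) ^ (a - 1) * (1 - Real.exp (-v)) ^ (b - 1)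
              * (1 - Real.exp (-(w - u))) ^ (b - 1) * Real.exp (-v - w + u)
              * Real.exp ((b + 1) * (y + w)) * (Real.exp (y + w) - 1) ^ (-(a + b + 1))
            = ((1 - Real.exp (-(x + v - y))) ^ (a - 1) * (1 - Real.exp (-v)) ^ (b - 1)
                * Real.exp (-v - w) * Real.exp ((b + 1) * (y + w))
                * (Real.exp (y + w) - 1) ^ (-(a + b + 1)))
              * ((1 - Real.exp (-(w - u))) ^ (b - 1) * Real.exp u) := by
          intro u
          rw [show -v - w + u = (-v - w) + u by ring, Real.exp_add]
          ring
        rw [show (∫ u in Ioo (0:ℝ) w,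
            (1 - Real.exp (-(x + v - y))) ^ (a - 1) * (1 - Real.exp (-v)) ^ (b - 1)
              * (1 - Real.exp (-(w - u))) ^ (b - 1) * Real.exp (-v - w + u)
              * Real.exp ((b + 1) * (y + w)) * (Real.exp (y + w) - 1) ^ (-(a + b + 1)))
          = ∫ u in Ioo (0:ℝ) w,
            ((1 - Real.exp (-(x + v - y))) ^ (a - 1) * (1 - Real.exp (-v)) ^ (b - 1)
                * Real.exp (-v - w) * Real.exp ((b + 1) * (y + w))
                * (Real.exp (y + w) - 1) ^ (-(a + b + 1)))
              * ((1 - Real.exp (-(w - u))) ^ (b - 1) * Real.exp u) from by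
          refine setIntegral_congr_fun measurableSet_Ioo fun u _ => hptr u]
        rw [MeasureTheory.integral_const_mul, lemB b w hb hw0']
        have hk := keyid a b (y + w) (by linarith : (0:ℝ) < y + w)
        have hsplit : Real.exp (-v - w) = Real.exp (-v) * Real.exp (-w) := by
          rw [← Real.exp_add]; ring_nf
        have hcancel : Real.exp (-w) * Real.exp w = 1 := by
          rw [← Real.exp_add]; simp
        rw [hsplit]
        linear_combination
          ((1 - Real.exp (-(x + v - y))) ^ (a - 1) * (1 - Real.exp (-v)) ^ (b - 1)
            * Real.exp (-v) * (1 - Real.exp (-w)) ^ b / b) * hk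
          + ((1 - Real.exp (-(x + v - y))) ^ (a - 1) * (1 - Real.exp (-v)) ^ (b - 1)
            * Real.exp (-v) * (1 - Real.exp (-w)) ^ b
            * (Real.exp ((b + 1) * (y + w)) * (Real.exp (y + w) - 1) ^ (-(a + b + 1))) / b)
            * hcancel
      rw [setIntegral_congr_fun measurableSet_Ioi hw, MeasureTheory.integral_const_mul,
        lemC a b y ha hb hy0]
      ring
    rw [setIntegral_congr_fun measurableSet_Ioo hy, MeasureTheory.integral_const_mul,
      lemD a (x + v) ha ha1 hxv]
    ring
  rw [setIntegral_congr_fun measurableSet_Ioi key, MeasureTheory.integral_mul_const,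
    lemA b hb]
  have hsin : 0 < Real.sin (π * a) := by
    apply Real.sin_pos_of_pos_of_lt_pi
    · positivity
    · nlinarith [Real.pi_pos]
  have hG : (0:ℝ) < Gamma (a + b + 1) := Real.Gamma_pos_of_pos (by linarith)
  rw [hC, Real.Gamma_add_one hb.ne']
  field_simp
end
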